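/- arXiv:0803.1852 — 10 statements merged into one kernel-verified Lean document; each statement's English description precedes it below -/
import Mathlib

section
/- Let A be a p(t)-homogeneous bounded operator with respect to a family of unitary operators {U_t}. If z belongs to the point spectrum of A, then z·p(t)^n belongs to the point spectrum of A for every n ∈ ℤ and t ∈ 𝔗. -/
open InnerProductSpace

/-- for a bounded `p(t)`-homogeneous operator `A`, the point
spectrum is invariant under multiplication by `p(t)^n`, `n ∈ ℤ`. -/
theorem pt_homogeneous_point_spectrum
    {H : Type*} [NormedAddCommGroup H] [InnerProductSpace ℂ H] [CompleteSpace H]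
    {T : Type*} (U : T → (H ≃ₗᵢ[ℂ] H)) (g : T → T) (p : T → ℝ)
    (hadj : ∀ (t : T) (x y : H), (inner ℂ (U t x) y : ℂ) = inner ℂ x (U (g t) y))
    (A : H →L[ℂ] H)
    (hhom : ∀ (t : T) (x : H), U t (A x) = (p t : ℂ) • A (U t x)) :
    ∀ z : ℂ, (∃ v : H, v ≠ 0 ∧ A v = z • v) →
      ∀ (n : ℤ) (t : T), ∃ v : H, v ≠ 0 ∧ A v = (z * (p t : ℂ) ^ n) • v := by
  rintro z ⟨v, hv, hAv⟩ n t
  have hsymm : ∀ (s : T) (y : H), U (g s) y = (U s).symm y := by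
    intro s y
    refine ext_inner_left ℂ (fun x => ?_)
    rw [← hadj]
    have h := (U s).inner_map_map x ((U s).symm y)
    simpa using h
  by_cases hp : (p t : ℂ) = 0
  · have h0 : U t (A v) = 0 := by rw [hhom, hp, zero_smul]
    have hA0 : A v = 0 := by
      have := congrArg (U t).symm h0
      simpa using this
    have hz : z = 0 := by
      rw [hAv] at hA0
      rcases smul_eq_zero.mp hA0 with h | h
      · exact h
      · exact absurd h hv
    exact ⟨v, hv, by simp [hAv, hz]⟩
  · have up : ∀ (w : H) (c : ℂ), A w = c • w →
        A (U (g t) w) = ((p t : ℂ) * c) • U (g t) w := by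
      intro w c hw
      have h1 : U t (A (U (g t) w)) = (p t : ℂ) • A w := by
        rw [hhom]
        congr 1
        rw [hsymm]
        simp
      have h2 := congrArg (U t).symm h1
      simp only [LinearIsometryEquiv.symm_apply_apply, map_smul] at h2
      rw [h2, hw, hsymm, map_smul, smul_smul]
    have down : ∀ (w : H) (c : ℂ), A w = c • w →
        A (U t w) = ((p t : ℂ)⁻¹ * c) • U t w := by
      intro w c hw
      have h1 := hhom t w
      rw [hw, map_smul] at h1
      have : A (U t w) = (p t : ℂ)⁻¹ • (c • U t w) := by
        rw [h1, smul_smul, inv_mul_cancel₀ hp, one_smul]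
      rw [this, smul_smul]
    have key : ∀ m : ℤ, ∃ w : H, w ≠ 0 ∧ A w = (z * (p t : ℂ) ^ m) • w := by
      intro m
      induction m using Int.induction_on with
      | zero => exact ⟨v, hv, by simpa using hAv⟩
      | succ k ih =>
        obtain ⟨w, hw, hAw⟩ := ih
        refine ⟨U (g t) w, by simpa using hw, ?_⟩
        rw [up w _ hAw]
        congr 1
        rw [zpow_add₀ hp, zpow_one]
        ring
      | pred k ih =>
        obtain ⟨w, hw, hAw⟩ := ih
        refine ⟨U t w, by simpa using hw, ?_⟩
        rw [down w _ hAw]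
        congr 1
        rw [zpow_sub₀ hp, zpow_one]
        ring
    exact key n
end

section
/- Let A be a densely defined symmetric operator with finite defect numbers that is p(t)-homogeneous with respect to a family of unitary operators {U_t}, and suppose p(t₀) ≠ 1 for some t₀ ∈ 𝔗. Then every p(t)-homogeneous self-adjoint extension of A is nonnegative. -/
open InnerProductSpace

/-- `p(t)`-homogeneity for unbounded operators (equality `U t A = p t • A U t`
including domains). -/
def IsPtHomogeneous {H : Type*} [NormedAddCommGroup H] [InnerProductSpace ℂ H]
    {T : Type*} (U : T → (H ≃ₗᵢ[ℂ] H)) (p : T → ℝ) (A : H →ₗ.[ℂ] H) : Prop :=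
  ∀ t : T, (∀ x : H, x ∈ A.domain ↔ U t x ∈ A.domain) ∧
    ∀ (x : H) (hx : x ∈ A.domain) (hx' : U t x ∈ A.domain),
      U t (A ⟨x, hx⟩) = (p t : ℂ) • A ⟨U t x, hx'⟩

section PtHomAuxSection

open Filter Topology Finset

namespace PtHomAux

variable {H : Type*} [NormedAddCommGroup H] [InnerProductSpace ℂ H] [CompleteSpace H]

local notation "⟪" x ", " y "⟫" => @inner ℂ _ _ x y

lemma symm_of_sa {B : H →ₗ.[ℂ] H} (hBsa : B.adjoint = B) (x y : B.domain) :
    ⟪(B x : H), (y : H)⟫ = ⟪(x : H), (B y : H)⟫ := by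
  have hd : Dense (B.domain : Set H) :=
    IsSelfAdjoint.dense_domain (LinearPMap.isSelfAdjoint_def.mpr hBsa)
  have h := LinearPMap.adjoint_isFormalAdjoint hd
  have hx : (x : H) ∈ B.adjoint.domain := by rw [hBsa]; exact x.2
  have hval : B.adjoint ⟨(x : H), hx⟩ = B x := (le_of_eq hBsa).2 rfl
  have := h ⟨(x : H), hx⟩ y
  rwa [hval] at this

lemma closed_of_sa {B : H →ₗ.[ℂ] H} (hBsa : B.adjoint = B)
    (u : ℕ → B.domain) {x y : H}
    (hux : Tendsto (fun n => (u n : H)) atTop (𝓝 x))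
    (huy : Tendsto (fun n => (B (u n) : H)) atTop (𝓝 y)) :
    ∃ hx : x ∈ B.domain, B ⟨x, hx⟩ = y := by
  have hd : Dense (B.domain : Set H) :=
    IsSelfAdjoint.dense_domain (LinearPMap.isSelfAdjoint_def.mpr hBsa)
  have key : ∀ z : B.domain, ⟪y, (z : H)⟫ = ⟪x, (B z : H)⟫ := by
    intro z
    have h1 : Tendsto (fun n => ⟪(B (u n) : H), (z : H)⟫) atTop (𝓝 ⟪y, (z : H)⟫) :=
      huy.inner tendsto_const_nhds
    have h2 : (fun n => ⟪(B (u n) : H), (z : H)⟫)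
        = fun n => ⟪(u n : H), (B z : H)⟫ :=
      funext fun n => symm_of_sa hBsa _ _
    have h3 : Tendsto (fun n => ⟪(u n : H), (B z : H)⟫) atTop (𝓝 ⟪x, (B z : H)⟫) :=
      hux.inner tendsto_const_nhds
    rw [h2] at h1
    exact tendsto_nhds_unique h1 h3
  have hx' : x ∈ B.adjoint.domain :=
    LinearPMap.mem_adjoint_domain_of_exists x ⟨y, fun z => key z⟩
  have hx : x ∈ B.domain := by rw [← hBsa]; exact hx'
  refine ⟨hx, ?_⟩
  have hval : B.adjoint ⟨x, hx'⟩ = B ⟨x, hx⟩ := (le_of_eq hBsa).2 rfl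
  rw [← hval]
  exact LinearPMap.adjoint_apply_eq hd ⟨x, hx'⟩ (fun z => key z)

lemma core {A B : H →ₗ.[ℂ] H} (hAB : A ≤ B) (hBsa : B.adjoint = B)
    (hnn : ∀ u : A.domain, 0 ≤ (⟪(u : H), (A u : H)⟫).re)
    {σ : ℝ} (hσ : 0 < σ) (v : B.domain)
    (hv : ((B v : H) + (σ : ℂ) • (v : H)) ∈
      closure {z : H | ∃ u : A.domain, (A u : H) + (σ : ℂ) • (u : H) = z}) :
    0 ≤ (⟪(v : H), (B v : H) + (σ : ℂ) • (v : H)⟫).re := by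
  set z : H := (B v : H) + (σ : ℂ) • (v : H) with hz
  obtain ⟨w, hwmem, hwt⟩ := mem_closure_iff_seq_limit.1 hv
  choose uu huu using hwmem
  -- basic inequality
  have key : ∀ m n : ℕ, ‖(uu m : H) - (uu n : H)‖ ≤ ‖w m - w n‖ / σ := by
    intro m n
    set d : A.domain := uu m - uu n with hd
    have hdc : (d : H) = (uu m : H) - (uu n : H) := rfl
    have hAd : (A d : H) + (σ : ℂ) • (d : H) = w m - w n := by
      have : A d = A (uu m) - A (uu n) := by
        rw [hd, LinearPMap.map_sub]
      rw [this, hdc]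
      push_cast
      rw [← huu m, ← huu n]
      module
    have h1 : σ * ‖(d : H)‖ ^ 2 ≤ (⟪(d : H), w m - w n⟫).re := by
      rw [← hAd, inner_add_right, inner_smul_right]
      have h2 := hnn d
      have h3 : ((σ : ℂ) * ⟪(d : H), (d : H)⟫).re = σ * ‖(d : H)‖ ^ 2 := by
        rw [inner_self_eq_norm_sq_to_K]
        simp [← Complex.ofReal_pow, ← Complex.ofReal_mul, Complex.ofReal_re]
      rw [Complex.add_re, h3]
      linarith
    have h4 : (⟪(d : H), w m - w n⟫).re ≤ ‖(d : H)‖ * ‖w m - w n‖ := by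
      exact re_inner_le_norm (𝕜 := ℂ) (d : H) (w m - w n)
    rcases eq_or_lt_of_le (norm_nonneg ((d : H))) with h5 | h5
    · rw [hdc] at h5
      rw [← h5]
      positivity
    · rw [div_eq_inv_mul, ← hdc]
      rw [le_inv_mul_iff₀ hσ]
      have := h1.trans h4
      nlinarith [h5]
  have hwC : CauchySeq w := hwt.cauchySeq
  have huC : CauchySeq (fun n => (uu n : H)) := by
    rw [Metric.cauchySeq_iff] at hwC ⊢
    intro ε hε
    obtain ⟨N, hN⟩ := hwC (ε * σ) (by positivity)
    refine ⟨N, fun m hm n hn => ?_⟩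
    have := hN m hm n hn
    rw [dist_eq_norm] at this ⊢
    calc ‖(uu m : H) - (uu n : H)‖ ≤ ‖w m - w n‖ / σ := key m n
      _ < ε * σ / σ := by gcongr
      _ = ε := by field_simp
  obtain ⟨l, hl⟩ := cauchySeq_tendsto_of_complete huC
  have hAt : Tendsto (fun n => (A (uu n) : H)) atTop (𝓝 (z - (σ : ℂ) • l)) := by
    have hfe : (fun n => (A (uu n) : H)) = fun n => w n - (σ : ℂ) • (uu n : H) := by
      funext n
      rw [← huu n]; abel
    rw [hfe]
    exact hwt.sub (hl.const_smul ((σ : ℂ)))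
  set ub : ℕ → B.domain := fun n => ⟨(uu n : H), hAB.1 (uu n).2⟩ with hub
  have hBub : ∀ n, (B (ub n) : H) = (A (uu n) : H) := fun n => (hAB.2 rfl).symm
  have hBt : Tendsto (fun n => (B (ub n) : H)) atTop (𝓝 (z - (σ : ℂ) • l)) := by
    have : (fun n => (B (ub n) : H)) = fun n => (A (uu n) : H) := funext hBub
    rw [this]; exact hAt
  obtain ⟨hlB, hBl⟩ := closed_of_sa hBsa ub hl hBt
  -- nonneg of limit
  have h4 : ∀ n, 0 ≤ (⟪(uu n : H), w n⟫).re := by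
    intro n
    rw [← huu n, inner_add_right, inner_smul_right, Complex.add_re]
    have h2 := hnn (uu n)
    have h3 : ((σ : ℂ) * ⟪(uu n : H), (uu n : H)⟫).re = σ * ‖(uu n : H)‖ ^ 2 := by
      rw [inner_self_eq_norm_sq_to_K]; simp [← Complex.ofReal_pow, ← Complex.ofReal_mul, Complex.ofReal_re]
    rw [h3]
    nlinarith [norm_nonneg ((uu n : H)), h2]
  have h5 : Tendsto (fun n => (⟪(uu n : H), w n⟫).re) atTop (𝓝 ((⟪l, z⟫).re)) := by
    exact (Complex.continuous_re.tendsto _).comp (hl.inner hwt)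
  have h6 : 0 ≤ (⟪l, z⟫).re := ge_of_tendsto' h5 h4
  -- transfer to v
  have h7 : ⟪z, (v : H)⟫ = ⟪l, z⟫ := by
    have hzl : z = (B ⟨l, hlB⟩ : H) + (σ : ℂ) • l := by
      rw [hBl]; abel
    calc ⟪z, (v : H)⟫ = ⟪(B ⟨l, hlB⟩ : H), (v : H)⟫ + ⟪(σ : ℂ) • l, (v : H)⟫ := by
          rw [hzl, inner_add_left]
      _ = ⟪l, (B v : H)⟫ + (σ : ℂ) * ⟪l, (v : H)⟫ := by
          rw [symm_of_sa hBsa ⟨l, hlB⟩ v, inner_smul_left]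
          norm_num
      _ = ⟪l, z⟫ := by rw [hz, inner_add_right, inner_smul_right]
  have h8 : ⟪(v : H), z⟫ = (starRingEnd ℂ) ⟪z, (v : H)⟫ := (inner_conj_symm _ _).symm
  rw [h8, h7, Complex.conj_re]
  exact h6

/-- The real symmetric form `s(x,y) = Re⟪x, (B+1)y⟫`. -/
noncomputable def sB (B : H →ₗ.[ℂ] H) (x y : B.domain) : ℝ :=
  (⟪(x : H), (B y : H) + (y : H)⟫).re

lemma sB_add_left (B : H →ₗ.[ℂ] H) (x x' y : B.domain) :
    sB B (x + x') y = sB B x y + sB B x' y := by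
  simp [sB, inner_add_left]
  ring

lemma sB_smul_left (B : H →ₗ.[ℂ] H) (r : ℝ) (x y : B.domain) :
    sB B ((r : ℂ) • x) y = r * sB B x y := by
  unfold sB
  rw [Submodule.coe_smul, inner_smul_left, Complex.conj_ofReal, Complex.re_ofReal_mul]

lemma sB_add_right (B : H →ₗ.[ℂ] H) (x y y' : B.domain) :
    sB B x (y + y') = sB B x y + sB B x y' := by
  unfold sB
  rw [LinearPMap.map_add]
  have : ((B y : H) + B y') + ((y : H) + (y' : H))
      = ((B y : H) + y) + ((B y' : H) + y') := by abel
  rw [Submodule.coe_add, this, inner_add_right, Complex.add_re]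

lemma sB_smul_right (B : H →ₗ.[ℂ] H) (r : ℝ) (x y : B.domain) :
    sB B x ((r : ℂ) • y) = r * sB B x y := by
  unfold sB
  rw [LinearPMap.map_smul]
  have : ((r : ℂ) • (B y : H)) + (((r : ℂ) • y : B.domain) : H)
      = (r : ℂ) • ((B y : H) + y) := by
    rw [Submodule.coe_smul]
    rw [smul_add]
  rw [this, inner_smul_right, Complex.re_ofReal_mul]

lemma sB_zero_right (B : H →ₗ.[ℂ] H) (x : B.domain) : sB B x 0 = 0 := by
  have h0 : ((0 : ℝ) : ℂ) • (0 : B.domain) = (0 : B.domain) := by simp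
  have := sB_smul_right B 0 x 0
  rw [h0] at this
  linarith

lemma sB_sum_right (B : H →ₗ.[ℂ] H) (x : B.domain) {ι : Type*} (s : Finset ι)
    (f : ι → B.domain) :
    sB B x (∑ i ∈ s, f i) = ∑ i ∈ s, sB B x (f i) := by
  classical
  induction s using Finset.induction with
  | empty => simpa using sB_zero_right B x
  | insert _ _ hni ih =>
    rw [Finset.sum_insert hni, Finset.sum_insert hni, sB_add_right, ih]

lemma sB_symm {B : H →ₗ.[ℂ] H} (hBsa : B.adjoint = B) (x y : B.domain) :
    sB B x y = sB B y x := by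
  unfold sB
  rw [inner_add_right, inner_add_right, Complex.add_re, Complex.add_re]
  have h1 : (⟪(x : H), (B y : H)⟫).re = (⟪(y : H), (B x : H)⟫).re := by
    rw [← inner_conj_symm, symm_of_sa hBsa y x, Complex.conj_re]
  have h2 : (⟪(x : H), (y : H)⟫).re = (⟪(y : H), (x : H)⟫).re := by
    rw [← inner_conj_symm, Complex.conj_re]
  rw [h1, h2]

lemma sB_sum_left {B : H →ₗ.[ℂ] H} (hBsa : B.adjoint = B) (x : B.domain) {ι : Type*}
    (s : Finset ι) (f : ι → B.domain) :
    sB B (∑ i ∈ s, f i) x = ∑ i ∈ s, sB B (f i) x := by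
  rw [sB_symm hBsa, sB_sum_right]
  exact Finset.sum_congr rfl fun i _ => sB_symm hBsa x (f i)

/-- Size bound for `s`-orthonormal negative families, via the defect space. -/

lemma sB_sub_right (B : H →ₗ.[ℂ] H) (x y y' : B.domain) :
    sB B x (y - y') = sB B x y - sB B x y' := by
  have h : y - y' = y + ((-1 : ℝ) : ℂ) • y' := by
    push_cast
    rw [neg_one_smul, sub_eq_add_neg]
  rw [h, sB_add_right, sB_smul_right]
  ring

lemma negfam_card_le {A B : H →ₗ.[ℂ] H} (hAB : A ≤ B) (hBsa : B.adjoint = B)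
    (hnn : ∀ u : A.domain, 0 ≤ (⟪(u : H), (A u : H)⟫).re)
    (hdef : FiniteDimensional ℂ
      ((LinearMap.range (A.toFun + A.domain.subtype))ᗮ : Submodule ℂ H))
    {n : ℕ} (b : Fin n → B.domain)
    (hb : ∀ i j, sB B (b i) (b j) = if i = j then -1 else 0) :
    n ≤ Module.finrank ℝ ((LinearMap.range (A.toFun + A.domain.subtype))ᗮ : Submodule ℂ H) := by
  classical
  set D : Submodule ℂ H := (LinearMap.range (A.toFun + A.domain.subtype))ᗮ with hD
  haveI : FiniteDimensional ℂ D := hdef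
  haveI : CompleteSpace D := FiniteDimensional.complete ℂ D
  haveI hop : Submodule.HasOrthogonalProjection D := Submodule.HasOrthogonalProjection.ofCompleteSpace D
  set F : B.domain →ₗ[ℂ] H := B.toFun + B.domain.subtype with hF
  have hFx : ∀ x : B.domain, F x = (B x : H) + (x : H) := fun x => rfl
  set ψ : Fin n → D := fun i => Submodule.orthogonalProjectionOnto D (F (b i)) with hψ
  have hind : LinearIndependent ℝ ψ := by
    rw [Fintype.linearIndependent_iff]
    intro g hg
    set vB : B.domain := ∑ i, (g i : ℂ) • b i with hvB
    -- the projection of (B+1) vB vanishes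
    have hProj : Submodule.orthogonalProjectionOnto D (F vB) = 0 := by
      have h1 : F vB = ∑ i, (g i : ℂ) • F (b i) := by
        rw [hvB, map_sum]
        exact Finset.sum_congr rfl fun i _ => map_smul F _ _
      rw [h1, map_sum]
      have h2 : ∀ i : Fin n, Submodule.orthogonalProjectionOnto D ((g i : ℂ) • F (b i)) = g i • ψ i := by
        intro i
        rw [map_smul]
        rw [← algebraMap_smul ℂ (g i) (ψ i)]
        norm_num
        rfl
      calc (∑ i, Submodule.orthogonalProjectionOnto D ((g i : ℂ) • F (b i)))
          = ∑ i, g i • ψ i := Finset.sum_congr rfl fun i _ => h2 i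
        _ = 0 := hg
    -- hence (B+1) vB lies in the closure of the range of A+1
    have hmem : ((B vB : H) + ((1 : ℝ) : ℂ) • (vB : H)) ∈
        closure {z : H | ∃ u : A.domain, (A u : H) + ((1 : ℝ) : ℂ) • (u : H) = z} := by
      have h3 : F vB ∈ Dᗮ := by
        have : F vB - ((Submodule.orthogonalProjectionOnto D (F vB) : D) : H) ∈ Dᗮ := Submodule.sub_starProjection_mem_orthogonal (K := D) (F vB)
        rwa [hProj, ZeroMemClass.coe_zero, sub_zero] at this
      rw [hD, Submodule.orthogonal_orthogonal_eq_closure] at h3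
      have h4 : ((LinearMap.range (A.toFun + A.domain.subtype)).topologicalClosure : Set H)
          ⊆ closure {z : H | ∃ u : A.domain, (A u : H) + ((1 : ℝ) : ℂ) • (u : H) = z} := by
        rw [Submodule.topologicalClosure_coe]
        apply closure_mono
        rintro z ⟨u, rfl⟩
        exact ⟨u, by simp [LinearMap.add_apply]⟩
      have h5 := h4 h3
      have h6 : (B vB : H) + ((1 : ℝ) : ℂ) • (vB : H) = F vB := by
        rw [hFx vB]; norm_num
      rw [h6]
      exact h5
    have h6 := core hAB hBsa hnn (σ := 1) one_pos vB hmem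
    have h7 : (⟪(vB : H), (B vB : H) + ((1 : ℝ) : ℂ) • (vB : H)⟫).re = sB B vB vB := by
      unfold sB; norm_num
    rw [h7] at h6
    -- expand the gram sum
    have h8 : sB B vB vB = -∑ i, g i ^ 2 := by
      rw [hvB, sB_sum_left hBsa]
      have h9 : ∀ i : Fin n, sB B ((g i : ℂ) • b i) (∑ j, (g j : ℂ) • b j)
          = -(g i ^ 2) := by
        intro i
        rw [sB_smul_left, sB_sum_right]
        have hj : ∀ j : Fin n, sB B (b i) ((g j : ℂ) • b j) = g j * (if i = j then -1 else 0) := by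
          intro j; rw [sB_smul_right, hb i j]
        rw [Finset.sum_congr rfl fun j _ => hj j]
        simp [mul_ite]
        ring
      rw [Finset.sum_congr rfl fun i _ => h9 i]
      exact Finset.sum_neg_distrib _
    rw [h8] at h6
    have h10 : ∑ i, g i ^ 2 = 0 := le_antisymm (by linarith) (by positivity)
    intro i
    have := Finset.sum_eq_zero_iff_of_nonneg (fun j _ => sq_nonneg (g j)) |>.1 h10 i (by simp)
    exact pow_eq_zero_iff (n := 2) (by norm_num) |>.1 this
  have := hind.fintype_card_le_finrank
  simpa using this

/-- Semiboundedness of the form of `B` from finiteness of the defect space. -/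
lemma semibounded {A B : H →ₗ.[ℂ] H} (hAB : A ≤ B) (hBsa : B.adjoint = B)
    (hnn : ∀ u : A.domain, 0 ≤ (⟪(u : H), (A u : H)⟫).re)
    (hdef : FiniteDimensional ℂ
      ((LinearMap.range (A.toFun + A.domain.subtype))ᗮ : Submodule ℂ H)) :
    ∃ M : ℝ, ∀ x : B.domain, -(M * ‖(x : H)‖ ^ 2) ≤ sB B x x := by
  classical
  set d₂ := Module.finrank ℝ ((LinearMap.range (A.toFun + A.domain.subtype))ᗮ : Submodule ℂ H)
    with hd₂
  set P : ℕ → Prop :=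
    fun n => ∃ b : Fin n → B.domain, ∀ i j, sB B (b i) (b j) = if i = j then -1 else 0 with hP
  have hP0 : P 0 := ⟨fun i => i.elim0, fun i => i.elim0⟩
  have hPle : ∀ n, P n → n ≤ d₂ := by
    rintro n ⟨b, hb⟩
    exact negfam_card_le hAB hBsa hnn hdef b hb
  set N := Nat.findGreatest P d₂ with hN
  have hPN : P N := Nat.findGreatest_spec (Nat.zero_le d₂) hP0
  have hnot : ¬ P (N + 1) := by
    by_cases h : N + 1 ≤ d₂
    · exact Nat.findGreatest_is_greatest (Nat.lt_succ_self N) h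
    · intro hp; exact h (hPle _ hp)
  obtain ⟨b, hb⟩ := hPN
  refine ⟨∑ i, ‖(B (b i) : H) + (b i : H)‖ ^ 2, ?_⟩
  intro x
  set c : Fin N → ℝ := fun i => - sB B (b i) x with hc
  set v : B.domain := ∑ i, (c i : ℂ) • b i with hv
  set x' : B.domain := x - v with hx'
  have hbv : ∀ j, sB B (b j) v = - c j := by
    intro j
    rw [hv, sB_sum_right]
    have h2 : ∀ i : Fin N, sB B (b j) ((c i : ℂ) • b i) = c i * (if j = i then -1 else 0) := by
      intro i; rw [sB_smul_right, hb j i]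
    rw [Finset.sum_congr rfl fun i _ => h2 i]
    simp [mul_ite]
  have horth : ∀ j, sB B (b j) x' = 0 := by
    intro j
    rw [hx', sB_sub_right, hbv j, hc]
    ring
  have horth' : ∀ j, sB B x' (b j) = 0 := fun j => by
    rw [sB_symm hBsa]; exact horth j
  have hnonneg' : 0 ≤ sB B x' x' := by
    by_contra hcon
    push_neg at hcon
    set t : ℝ := Real.sqrt (- sB B x' x') with ht
    have ht0 : 0 < t := Real.sqrt_pos.2 (by linarith)
    have ht2 : t ^ 2 = - sB B x' x' := Real.sq_sqrt (by linarith)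
    apply hnot
    refine ⟨Fin.snoc b (((t⁻¹ : ℝ) : ℂ) • x'), ?_⟩
    intro i j
    refine Fin.lastCases ?_ ?_ i
    · refine Fin.lastCases ?_ ?_ j
      · rw [Fin.snoc_last, sB_smul_left, sB_smul_right, if_pos rfl]
        have hss : sB B x' x' = -(t ^ 2) := by linarith
        rw [hss]
        field_simp
      · intro j'
        rw [Fin.snoc_last, Fin.snoc_castSucc, sB_smul_left, horth' j']
        have : Fin.last N ≠ j'.castSucc := (Fin.castSucc_lt_last j').ne'
        rw [if_neg this]
        ring
    · intro i'
      refine Fin.lastCases ?_ ?_ j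
      · rw [Fin.snoc_last, Fin.snoc_castSucc, sB_smul_right, horth i']
        have : i'.castSucc ≠ Fin.last N := (Fin.castSucc_lt_last i').ne
        rw [if_neg this]
        ring
      · intro j'
        rw [Fin.snoc_castSucc, Fin.snoc_castSucc, hb i' j']
        simp [Fin.castSucc_inj]
  -- now expand
  have hx : x = x' + v := by rw [hx']; abel
  have hxv : sB B x' v = 0 := by
    rw [hv, sB_sum_right]
    have : ∀ i : Fin N, sB B x' ((c i : ℂ) • b i) = 0 := by
      intro i; rw [sB_smul_right, horth' i]; ring
    rw [Finset.sum_congr rfl fun i _ => this i]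
    simp
  have hvx : sB B v x' = 0 := by rw [sB_symm hBsa]; exact hxv
  have hvv : sB B v v = - ∑ i, c i ^ 2 := by
    rw [hv, sB_sum_left hBsa]
    have : ∀ i : Fin N, sB B ((c i : ℂ) • b i) v = -(c i ^ 2) := by
      intro i
      rw [sB_smul_left]
      have := hbv i
      rw [hv] at this
      rw [this]
      ring
    rw [Finset.sum_congr rfl fun i _ => this i]
    rw [Finset.sum_neg_distrib]
  have hexp : sB B x x = sB B x' x' + (- ∑ i, c i ^ 2) := by
    rw [hx, sB_add_left, sB_add_right, sB_add_right, hxv, hvx, hvv]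
    ring
  have hci : ∀ i, c i ^ 2 ≤ ‖(B (b i) : H) + (b i : H)‖ ^ 2 * ‖(x : H)‖ ^ 2 := by
    intro i
    have h1 : |c i| ≤ ‖(x : H)‖ * ‖(B (b i) : H) + (b i : H)‖ := by
      rw [hc]
      simp only [abs_neg]
      rw [sB_symm hBsa]
      unfold sB
      calc |(⟪(x : H), (B (b i) : H) + (b i : H)⟫).re|
          ≤ ‖⟪(x : H), (B (b i) : H) + (b i : H)⟫‖ := Complex.abs_re_le_norm _
        _ ≤ ‖(x : H)‖ * ‖(B (b i) : H) + (b i : H)‖ := by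
            exact norm_inner_le_norm (𝕜 := ℂ) (x : H) ((B (b i) : H) + (b i : H))
    calc c i ^ 2 = |c i| ^ 2 := (sq_abs _).symm
      _ ≤ (‖(x : H)‖ * ‖(B (b i) : H) + (b i : H)‖) ^ 2 := by
          apply pow_le_pow_left₀ (abs_nonneg _) h1
      _ = ‖(B (b i) : H) + (b i : H)‖ ^ 2 * ‖(x : H)‖ ^ 2 := by ring
  have hsum : ∑ i, c i ^ 2 ≤ (∑ i, ‖(B (b i) : H) + (b i : H)‖ ^ 2) * ‖(x : H)‖ ^ 2 := by
    rw [Finset.sum_mul]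
    exact Finset.sum_le_sum fun i _ => hci i
  rw [hexp]
  nlinarith [hnonneg']

end PtHomAux

end PtHomAuxSection

open PtHomAux Filter Topology Finset in
/-- if a densely defined nonnegative symmetric operator `A` with
finite defect numbers is `p(t)`-homogeneous and `p t₀ ≠ 1` for some `t₀`, then
every `p(t)`-homogeneous self-adjoint extension of `A` is nonnegative. -/
theorem pt_homogeneous_selfadjoint_extension_nonneg
    {H : Type*} [NormedAddCommGroup H] [InnerProductSpace ℂ H] [CompleteSpace H]
    {T : Type*} (U : T → (H ≃ₗᵢ[ℂ] H)) (g : T → T) (p : T → ℝ)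
    (hadj : ∀ (t : T) (x y : H), (inner ℂ (U t x) y : ℂ) = inner ℂ x (U (g t) y))
    (A : H →ₗ.[ℂ] H) (hdense : Dense (A.domain : Set H))
    (hsym : ∀ x y : A.domain, (inner ℂ (A x) (y : H) : ℂ) = inner ℂ (x : H) (A y))
    (hnonneg : ∀ x : A.domain, 0 ≤ (inner ℂ (x : H) (A x) : ℂ).re)
    (hdefect : FiniteDimensional ℂ
      ((LinearMap.range (A.toFun + A.domain.subtype))ᗮ : Submodule ℂ H))
    (hhom : IsPtHomogeneous U p A)
    (t₀ : T) (hp : p t₀ ≠ 1) :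
    ∀ B : H →ₗ.[ℂ] H, A ≤ B → B.adjoint = B → IsPtHomogeneous U p B →
      ∀ x : B.domain, 0 ≤ (inner ℂ (x : H) (B x) : ℂ).re := by
  intro B hAB hBsa hhomB x
  by_contra hneg
  push_neg at hneg
  set P : ℝ := p t₀ with hP
  -- membership transport for U t₀
  have hdomU : ∀ y : B.domain, U t₀ (y : H) ∈ B.domain := fun y => ((hhomB t₀).1 y).1 y.2
  rcases lt_trichotomy P 0 with hPneg | hPzero | hPpos
  · -- CASE P < 0 : then the form of A vanishes, A = 0, and the defect condition is vacuous
    have hP0 : P ≠ 0 := ne_of_lt hPneg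
    have hPC : (P : ℂ) ≠ 0 := by exact_mod_cast hP0
    -- the quadratic form of A vanishes
    have hqA : ∀ u : A.domain, (inner ℂ (u : H) (A u : H) : ℂ) = 0 := by
      intro u
      have hu' : U t₀ (u : H) ∈ A.domain := ((hhom t₀).1 u).1 u.2
      have hid := (hhom t₀).2 (u : H) u.2 hu'
      have hBU : (A ⟨U t₀ (u : H), hu'⟩ : H) = (P : ℂ)⁻¹ • U t₀ (A u : H) := by
        rw [eq_inv_smul_iff₀ hPC]
        exact hid.symm
      have hq1 : (inner ℂ (U t₀ (u : H)) (A ⟨U t₀ (u : H), hu'⟩ : H) : ℂ)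
          = (P : ℂ)⁻¹ * inner ℂ (u : H) (A u : H) := by
        rw [hBU, inner_smul_right, LinearIsometryEquiv.inner_map_map]
      have h1 := hnonneg ⟨U t₀ (u : H), hu'⟩
      have h2 := hnonneg u
      rw [hq1] at h1
      have h3 : ((P : ℂ)⁻¹ * inner ℂ (u : H) (A u : H)).re
          = P⁻¹ * (inner ℂ (u : H) (A u : H) : ℂ).re := by
        rw [← Complex.ofReal_inv, Complex.re_ofReal_mul]
      rw [h3] at h1
      have h4 : P⁻¹ < 0 := inv_neg''.2 hPneg
      have h5 : (inner ℂ (u : H) (A u : H) : ℂ).re = 0 := by nlinarith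
      -- realness
      have h6 : (starRingEnd ℂ) (inner ℂ (u : H) (A u : H) : ℂ) = inner ℂ (u : H) (A u : H) := by
        rw [inner_conj_symm, hsym u u]
      have h7 : (inner ℂ (u : H) (A u : H) : ℂ).im = 0 := by
        have := Complex.conj_eq_iff_im.1 h6
        exact this
      exact Complex.ext h5 h7
    -- polarization : A is identically zero
    have hpol : ∀ u w : A.domain, (inner ℂ (u : H) (A w : H) : ℂ) = 0 := by
      have hS : ∀ z z' : A.domain,
          (inner ℂ (z : H) (A z' : H) : ℂ) + (inner ℂ (z' : H) (A z : H) : ℂ) = 0 := by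
        intro z z'
        have h1 := hqA (z + z')
        rw [LinearPMap.map_add] at h1
        rw [Submodule.coe_add, inner_add_left, inner_add_right, inner_add_right] at h1
        rw [hqA z] at h1
        rw [hqA z'] at h1
        ring_nf at h1 ⊢
        linear_combination h1
      intro u w
      have h1 := hS u w
      have h2 := hS u ((Complex.I : ℂ) • w)
      rw [LinearPMap.map_smul, Submodule.coe_smul, inner_smul_right, inner_smul_left] at h2
      have h3 : (starRingEnd ℂ) Complex.I = -Complex.I := Complex.conj_I
      rw [h3] at h2
      have h4 : Complex.I * ((inner ℂ (u : H) (A w : H) : ℂ) - inner ℂ (w : H) (A u : H)) = 0 := by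
        linear_combination h2
      have h5 : (inner ℂ (u : H) (A w : H) : ℂ) - inner ℂ (w : H) (A u : H) = 0 := by
        have := mul_eq_zero.1 h4
        rcases this with h | h
        · exact absurd h Complex.I_ne_zero
        · exact h
      linear_combination (h1 + h5) / 2
    have hA0 : ∀ w : A.domain, (A w : H) = 0 := by
      intro w
      have hcl : (A w : H) ∈ closure (A.domain : Set H) := hdense _
      obtain ⟨u, hu, hul⟩ := mem_closure_iff_seq_limit.1 hcl
      have h1 : Tendsto (fun n => (inner ℂ (u n) (A w : H) : ℂ)) atTop
          (𝓝 (inner ℂ (A w : H) (A w : H) : ℂ)) := hul.inner tendsto_const_nhds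
      have h2 : (fun n => (inner ℂ (u n) (A w : H) : ℂ)) = fun _ => (0 : ℂ) :=
        funext fun n => hpol ⟨u n, hu n⟩ w
      rw [h2] at h1
      have h3 : (inner ℂ (A w : H) (A w : H) : ℂ) = 0 :=
        (tendsto_nhds_unique tendsto_const_nhds h1).symm
      exact inner_self_eq_zero.1 h3
    -- now every vector is in the closure hypothesis of `core`, for every σ > 0
    have hkey : ∀ σ : ℝ, 0 < σ →
        0 ≤ (inner ℂ (x : H) ((B x : H) + (σ : ℂ) • (x : H)) : ℂ).re := by
      intro σ hσ
      have hσC : (σ : ℂ) ≠ 0 := by exact_mod_cast ne_of_gt hσ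
      have hdense' : Dense {z : H | ∃ u : A.domain, (A u : H) + (σ : ℂ) • (u : H) = z} := by
        intro z
        rw [mem_closure_iff_seq_limit]
        obtain ⟨u, hu, hul⟩ := mem_closure_iff_seq_limit.1 (hdense ((σ : ℂ)⁻¹ • z))
        refine ⟨fun n => (σ : ℂ) • u n, fun n => ⟨⟨u n, hu n⟩, ?_⟩, ?_⟩
        · rw [hA0 ⟨u n, hu n⟩, zero_add]
        · have := hul.const_smul ((σ : ℂ))
          rwa [smul_inv_smul₀ hσC] at this
      exact core hAB hBsa hnonneg hσ x (hdense' _)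
    set σ₀ : ℝ := -(inner ℂ (x : H) (B x : H) : ℂ).re / (2 * (‖(x : H)‖ ^ 2 + 1)) with hσ₀
    have hσ₀pos : 0 < σ₀ := by
      rw [hσ₀]
      apply div_pos (by linarith) (by positivity)
    have h1 := hkey σ₀ hσ₀pos
    rw [inner_add_right, inner_smul_right, Complex.add_re] at h1
    have h2 : ((σ₀ : ℂ) * inner ℂ (x : H) (x : H)).re = σ₀ * ‖(x : H)‖ ^ 2 := by
      rw [inner_self_eq_norm_sq_to_K]
      simp [← Complex.ofReal_pow, ← Complex.ofReal_mul, Complex.ofReal_re]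
    rw [h2] at h1
    rw [hσ₀] at h1
    have h5 : (-(inner ℂ (x : H) (B x) : ℂ).re) * ‖(x : H)‖ ^ 2 / (2 * (‖(x : H)‖ ^ 2 + 1))
        < -(inner ℂ (x : H) (B x) : ℂ).re := by
      rw [div_lt_iff₀ (by positivity)]
      nlinarith
    rw [div_mul_eq_mul_div] at h1
    linarith
  · -- CASE P = 0 : B vanishes
    have hid := (hhomB t₀).2 (x : H) x.2 (hdomU x)
    rw [hP] at hPzero
    rw [hPzero] at hid
    norm_num at hid
    have hBx0 : (B x : H) = 0 := by
      apply (U t₀).injective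
      rw [hid, map_zero]
    rw [hBx0] at hneg
    rw [inner_zero_right] at hneg
    norm_num at hneg
  · -- CASE P > 0
    have hPC : (P : ℂ) ≠ 0 := by exact_mod_cast ne_of_gt hPpos
    -- inverse property of U (g t₀)
    have hWU : ∀ z : H, U t₀ (U (g t₀) z) = z := by
      intro z
      have h1 : ∀ w : H, (inner ℂ w (U (g t₀) z - (U t₀).symm z) : ℂ) = 0 := by
        intro w
        rw [inner_sub_right]
        have h2 := hadj t₀ w z
        have h3 : (inner ℂ w ((U t₀).symm z) : ℂ) = inner ℂ (U t₀ w) z := by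
          rw [← LinearIsometryEquiv.inner_map_map (U t₀) w ((U t₀).symm z),
            LinearIsometryEquiv.apply_symm_apply]
        rw [h3, ← h2, sub_self]
      have h4 := h1 (U (g t₀) z - (U t₀).symm z)
      rw [inner_self_eq_zero] at h4
      have h5 : U (g t₀) z = (U t₀).symm z := sub_eq_zero.1 h4
      rw [h5, LinearIsometryEquiv.apply_symm_apply]
    -- two scaling steps
    have hstepU : ∀ y : B.domain, ∃ y' : B.domain, ‖(y' : H)‖ = ‖(y : H)‖ ∧
        (inner ℂ (y' : H) (B y' : H) : ℂ).re = P⁻¹ * (inner ℂ (y : H) (B y : H) : ℂ).re := by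
      intro y
      refine ⟨⟨U t₀ (y : H), hdomU y⟩, (U t₀).norm_map _, ?_⟩
      have hid := (hhomB t₀).2 (y : H) y.2 (hdomU y)
      have hBU : (B ⟨U t₀ (y : H), hdomU y⟩ : H) = (P : ℂ)⁻¹ • U t₀ (B y : H) := by
        rw [eq_inv_smul_iff₀ hPC]
        exact hid.symm
      have h1 : (inner ℂ (U t₀ (y : H)) (B ⟨U t₀ (y : H), hdomU y⟩ : H) : ℂ)
          = (P : ℂ)⁻¹ * inner ℂ (y : H) (B y : H) := by
        rw [hBU, inner_smul_right, LinearIsometryEquiv.inner_map_map]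
      simp only [h1]
      rw [← Complex.ofReal_inv, Complex.re_ofReal_mul]
    have hstepW : ∀ y : B.domain, ∃ y' : B.domain, ‖(y' : H)‖ = ‖(y : H)‖ ∧
        (inner ℂ (y' : H) (B y' : H) : ℂ).re = P * (inner ℂ (y : H) (B y : H) : ℂ).re := by
      intro y
      have hmem : U (g t₀) (y : H) ∈ B.domain := by
        apply ((hhomB t₀).1 (U (g t₀) (y : H))).2
        rw [hWU]
        exact y.2
      have hmem' : U t₀ (U (g t₀) (y : H)) ∈ B.domain := by
        rw [hWU]; exact y.2
      refine ⟨⟨U (g t₀) (y : H), hmem⟩, (U (g t₀)).norm_map _, ?_⟩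
      have hid := (hhomB t₀).2 (U (g t₀) (y : H)) hmem hmem'
      have hyy : (⟨U t₀ (U (g t₀) (y : H)), hmem'⟩ : B.domain) = y := Subtype.ext (hWU _)
      rw [hyy] at hid
      have h1 : (inner ℂ (U (g t₀) (y : H)) (B ⟨U (g t₀) (y : H), hmem⟩ : H) : ℂ)
          = inner ℂ (U t₀ (U (g t₀) (y : H))) (U t₀ (B ⟨U (g t₀) (y : H), hmem⟩ : H)) :=
        (LinearIsometryEquiv.inner_map_map _ _ _).symm
      rw [h1, hid, hWU, inner_smul_right, Complex.re_ofReal_mul]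
    -- pick the expanding direction
    obtain ⟨r, hr, hstep⟩ : ∃ r : ℝ, 1 < r ∧ ∀ y : B.domain, ∃ y' : B.domain,
        ‖(y' : H)‖ = ‖(y : H)‖ ∧
        (inner ℂ (y' : H) (B y' : H) : ℂ).re = r * (inner ℂ (y : H) (B y : H) : ℂ).re := by
      rcases lt_or_gt_of_ne (show P ≠ 1 from hp) with h | h
      · exact ⟨P⁻¹, (one_lt_inv₀ hPpos).2 h, hstepU⟩
      · exact ⟨P, h, hstepW⟩
    have hiter : ∀ n : ℕ, ∃ y : B.domain, ‖(y : H)‖ = ‖(x : H)‖ ∧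
        (inner ℂ (y : H) (B y : H) : ℂ).re = r ^ n * (inner ℂ (x : H) (B x : H) : ℂ).re := by
      intro n
      induction n with
      | zero => exact ⟨x, rfl, by norm_num⟩
      | succ n ih =>
        obtain ⟨y, h1, h2⟩ := ih
        obtain ⟨y', h3, h4⟩ := hstep y
        exact ⟨y', h3.trans h1, by rw [h4, h2]; ring⟩
    obtain ⟨M, hM⟩ := semibounded hAB hBsa hnonneg hdefect
    set q : ℝ := (inner ℂ (x : H) (B x : H) : ℂ).re with hq
    set K : ℝ := (M + 1) * ‖(x : H)‖ ^ 2 with hK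
    obtain ⟨n, hn⟩ := pow_unbounded_of_one_lt ((K + 1) / (-q)) hr
    obtain ⟨y, hy1, hy2⟩ := hiter n
    have h1 := hM y
    have h2 : sB B y y = (inner ℂ (y : H) (B y : H) : ℂ).re + ‖(y : H)‖ ^ 2 := by
      unfold sB
      rw [inner_add_right, Complex.add_re, inner_self_eq_norm_sq_to_K]
      simp [← Complex.ofReal_pow, Complex.ofReal_re]
    rw [h2, hy1, hy2] at h1
    have h3 : K + 1 < r ^ n * (-q) := by
      rw [div_lt_iff₀ (by linarith)] at hn
      linarith
    have h4 : 0 < r ^ n := pow_pos (by linarith) n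
    nlinarith
end

section
/- Let A be a densely defined nonnegative symmetric operator that is p(t)-homogeneous with respect to a family of unitary operators {U_t} closed under adjoints. Then the Friedrichs extension A_F of A is also p(t)-homogeneous with respect to {U_t}. -/
open InnerProductSpace

noncomputable section FriedrichsAux

variable {H : Type*} [NormedAddCommGroup H] [InnerProductSpace ℂ H]

/-- Type synonym for the domain of `A` equipped with the form inner ℂ product. -/
def FriedrichsFS (A : H →ₗ.[ℂ] H) : Type _ := A.domain

instance (A : H →ₗ.[ℂ] H) : AddCommGroup (FriedrichsFS A) :=
  inferInstanceAs (AddCommGroup A.domain)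

instance (A : H →ₗ.[ℂ] H) : Module ℂ (FriedrichsFS A) :=
  inferInstanceAs (Module ℂ A.domain)

/-- Reinterpret an element of the domain as an element of the form space. -/
def FriedrichsFS.of (A : H →ₗ.[ℂ] H) (x : A.domain) : FriedrichsFS A := x

/-- Reinterpret an element of the form space as an element of the domain. -/
def FriedrichsFS.toD {A : H →ₗ.[ℂ] H} (x : FriedrichsFS A) : A.domain := x

@[simp] lemma FriedrichsFS.toD_of (A : H →ₗ.[ℂ] H) (x : A.domain) :
    (FriedrichsFS.of A x).toD = x := rfl

lemma FriedrichsFS.toD_add {A : H →ₗ.[ℂ] H} (x y : FriedrichsFS A) :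
    (x + y).toD = x.toD + y.toD := rfl

lemma FriedrichsFS.toD_smul {A : H →ₗ.[ℂ] H} (c : ℂ) (x : FriedrichsFS A) :
    (c • x).toD = c • x.toD := rfl

/-- The form inner ℂ product core on the domain of a nonnegative symmetric operator. -/
def friedrichsCore (A : H →ₗ.[ℂ] H)
    (hsym : ∀ x y : A.domain, (inner ℂ (A x) (y : H) : ℂ) = inner ℂ (x : H) (A y))
    (hnonneg : ∀ x : A.domain, 0 ≤ (inner ℂ (x : H) (A x) : ℂ).re) :
    InnerProductSpace.Core ℂ (FriedrichsFS A) where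
  inner x y := (inner ℂ (x.toD : H) (y.toD : H) : ℂ) + inner ℂ (A x.toD) (y.toD : H)
  conj_inner_symm x y := by
    simp only [map_add, inner_conj_symm]
    rw [hsym x.toD y.toD]
  re_inner_nonneg x := by
    have h1 : (0:ℝ) ≤ (inner ℂ (x.toD : H) (x.toD : H) : ℂ).re := by
      simpa using inner_self_nonneg (𝕜 := ℂ) (x := (x.toD : H))
    have h2 : (0:ℝ) ≤ (inner ℂ (A x.toD) (x.toD : H) : ℂ).re := by
      have := hnonneg x.toD
      rwa [← inner_conj_symm, Complex.conj_re] at this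
    simpa using add_nonneg h1 h2
  add_left x y z := by
    simp only [FriedrichsFS.toD_add, Submodule.coe_add, LinearPMap.map_add,
      inner_add_left]
    ring
  smul_left x y r := by
    simp only [FriedrichsFS.toD_smul, Submodule.coe_smul, LinearPMap.map_smul,
      inner_smul_left]
    ring
  definite x hx := by
    have hre : ((inner ℂ (x.toD : H) (x.toD : H) : ℂ) + inner ℂ (A x.toD) (x.toD : H)).re = 0 := by
      rw [show (inner ℂ (x.toD : H) (x.toD : H) : ℂ) + inner ℂ (A x.toD) (x.toD : H) = 0 from hx]
      simp
    have h2 : (0:ℝ) ≤ (inner ℂ (A x.toD) (x.toD : H) : ℂ).re := by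
      have := hnonneg x.toD
      rwa [← inner_conj_symm, Complex.conj_re] at this
    have h1 : (inner ℂ (x.toD : H) (x.toD : H) : ℂ).re = 0 := by
      have h1' : (0:ℝ) ≤ (inner ℂ (x.toD : H) (x.toD : H) : ℂ).re := by
        simpa using inner_self_nonneg (𝕜 := ℂ) (x := (x.toD : H))
      rw [Complex.add_re] at hre
      linarith
    have hn : ‖(x.toD : H)‖ ^ 2 = 0 := by
      rw [← inner_self_eq_norm_sq (𝕜 := ℂ) (x.toD : H)]
      simpa using h1
    have hv : (x.toD : H) = 0 := by
      have := pow_eq_zero_iff (n := 2) (by norm_num) |>.mp (by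
        rw [← hn])
      exact norm_eq_zero.mp this
    show FriedrichsFS.of A x.toD = 0
    have : x.toD = 0 := Subtype.ext hv
    rw [this]; rfl



section Key

variable [CompleteSpace H]

theorem friedrichs_key (A : H →ₗ.[ℂ] H) (hdense : Dense (A.domain : Set H))
    (hsym : ∀ x y : A.domain, (inner ℂ (A x) (y : H) : ℂ) = inner ℂ (x : H) (A y))
    (hnonneg : ∀ x : A.domain, 0 ≤ (inner ℂ (x : H) (A x) : ℂ).re)
    (AF : H →ₗ.[ℂ] H)
    (hAF : ∀ (f f' : H),
      (∃ hf : f ∈ AF.domain, AF ⟨f, hf⟩ = f') ↔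
        ((∃ hf : f ∈ A.adjoint.domain, A.adjoint ⟨f, hf⟩ = f') ∧
          ∀ ε : ℝ, 0 < ε → ∃ h : A.domain,
            ‖f - (h : H)‖ ^ 2 + (inner ℂ (f' - A h) (f - (h : H)) : ℂ).re < ε))
    (u : H) (hu : u ∈ AF.domain) (δ : ℝ) (hδ : 0 < δ) :
    ∃ h : A.domain, ‖u - (h : H)‖ ^ 2 < δ ∧
      0 ≤ ‖u - (h : H)‖ ^ 2 + (inner ℂ (AF ⟨u, hu⟩ - A h) (u - (h : H)) : ℂ).re ∧
      ‖u - (h : H)‖ ^ 2 + (inner ℂ (AF ⟨u, hu⟩ - A h) (u - (h : H)) : ℂ).re < δ := by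
  classical
  letI core : InnerProductSpace.Core ℂ (FriedrichsFS A) := friedrichsCore A hsym hnonneg
  letI : NormedAddCommGroup (FriedrichsFS A) := core.toNormedAddCommGroup
  letI : InnerProductSpace ℂ (FriedrichsFS A) := InnerProductSpace.ofCore core.toCore
  -- the inner ℂ product on the form space, unfolded
  have hFSinner : ∀ x y : FriedrichsFS A,
      (inner ℂ x y : ℂ) = (inner ℂ (x.toD : H) (y.toD : H) : ℂ) + inner ℂ (A x.toD) (y.toD : H) := by
    intro x y; rfl
  have hAre : ∀ h : A.domain, 0 ≤ (inner ℂ (A h) (h : H) : ℂ).re := by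
    intro h
    have := hnonneg h
    rwa [← inner_conj_symm, Complex.conj_re] at this
  have hFSnorm : ∀ x : FriedrichsFS A,
      ‖x‖ ^ 2 = ‖(x.toD : H)‖ ^ 2 + (inner ℂ (A x.toD) (x.toD : H) : ℂ).re := by
    intro x
    have h1 := inner_self_eq_norm_sq (𝕜 := ℂ) x
    rw [hFSinner x x] at h1
    have h2 := inner_self_eq_norm_sq (𝕜 := ℂ) ((x.toD : H))
    simp only [RCLike.re_to_complex, Complex.add_re] at h1 h2
    rw [← h1, h2]
  have hb : ∀ x : FriedrichsFS A, ‖(x.toD : H)‖ ≤ ‖x‖ := by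
    intro x
    have h1 := hFSnorm x
    have h2 := hAre x.toD
    nlinarith [norm_nonneg ((x.toD : H)), norm_nonneg x]
  set K := UniformSpace.Completion (FriedrichsFS A) with hK
  let e : FriedrichsFS A →L[ℂ] K := UniformSpace.Completion.toComplL
  have he : IsUniformInducing e :=
    (UniformSpace.Completion.coe_isometry (α := FriedrichsFS A)).isUniformInducing
  have hd : DenseRange e := UniformSpace.Completion.denseRange_coe
  let ι0L : FriedrichsFS A →ₗ[ℂ] H :=
    { toFun := fun x => ((x.toD : A.domain) : H)
      map_add' := fun x y => rfl
      map_smul' := fun c x => rfl }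
  let ι0 : FriedrichsFS A →L[ℂ] H := LinearMap.mkContinuous ι0L 1 (by
    intro x; rw [one_mul]; exact hb x)
  let ι : K →L[ℂ] H := ι0.extend e
  let j : H →L[ℂ] K := ContinuousLinearMap.adjoint ι
  have hιe : ∀ x : FriedrichsFS A, ι (e x) = (x.toD : H) := fun x =>
    ContinuousLinearMap.extend_eq (f := ι0) hd he x
  have hj : ∀ (z : H) (k : K), (inner ℂ (j z) k : ℂ) = inner ℂ z (ι k) := fun z k =>
    ContinuousLinearMap.adjoint_inner_left ι k z
  have hιnorm : ∀ k : K, ‖ι k‖ ≤ ‖k‖ := by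
    intro k
    refine UniformSpace.Completion.induction_on k ?_ ?_
    · exact isClosed_le (Continuous.norm ι.continuous) continuous_norm
    · intro a
      have h1 : ι ((a : K)) = (a.toD : H) := hιe a
      have h2 : ‖(a : K)‖ = ‖a‖ := UniformSpace.Completion.norm_coe a
      rw [h1, h2]
      exact hb a
  -- the embedding of the domain of `A` into `K`
  let emb : A.domain → K := fun h => e (FriedrichsFS.of A h)
  have hembnorm : ∀ h : A.domain,
      ‖emb h‖ ^ 2 = ‖(h : H)‖ ^ 2 + (inner ℂ (A h) (h : H) : ℂ).re := by
    intro h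
    have h2 : ‖emb h‖ = ‖FriedrichsFS.of A h‖ :=
      UniformSpace.Completion.norm_coe (FriedrichsFS.of A h)
    rw [h2, hFSnorm (FriedrichsFS.of A h)]
    rfl
  have hιemb : ∀ h : A.domain, ι (emb h) = (h : H) := fun h => hιe (FriedrichsFS.of A h)
  have hembI : ∀ (z : H) (h : A.domain), (inner ℂ z ((h : H)) : ℂ) = inner ℂ (j z) (emb h) := by
    intro z h
    rw [hj z (emb h), hιemb h]
  have hCC : ∀ (k : K) (h : A.domain),
      (inner ℂ (ι k) ((h : H) + A h) : ℂ) = inner ℂ k (emb h) := by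
    intro k h
    refine UniformSpace.Completion.induction_on k ?_ ?_
    · apply isClosed_eq
      · exact Continuous.inner (ι.continuous) continuous_const
      · exact Continuous.inner continuous_id continuous_const
    · intro a
      have h1 : ι ((a : K)) = (a.toD : H) := hιe a
      rw [h1]
      have h2 : (inner ℂ ((a : K)) (emb h) : ℂ) = inner ℂ a (FriedrichsFS.of A h) :=
        UniformSpace.Completion.inner_coe a (FriedrichsFS.of A h)
      rw [h2, hFSinner a (FriedrichsFS.of A h)]
      rw [inner_add_right]
      congr 1
      exact (hsym a.toD h).symm
  -- data coming from `u ∈ D(AF)`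
  set u' := AF ⟨u, hu⟩ with hu'def
  obtain ⟨⟨hub, hubval⟩, heps⟩ := (hAF u u').mp ⟨hu, rfl⟩
  have hpair : ∀ h : A.domain, (inner ℂ u' ((h : H)) : ℂ) = inner ℂ u (A h) := by
    intro h
    have := LinearPMap.adjoint_isFormalAdjoint hdense (T := A) ⟨u, hub⟩ h
    rwa [hubval] at this
  -- the fundamental identity for the Friedrichs functional
  have hstar : ∀ (v v' : H), (∀ h : A.domain, (inner ℂ v' ((h : H)) : ℂ) = inner ℂ v (A h)) →
      ∀ h : A.domain, ‖v - (h : H)‖ ^ 2 + (inner ℂ (v' - A h) (v - (h : H)) : ℂ).re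
        = ((inner ℂ (v + v') v : ℂ).re - ‖j (v + v')‖ ^ 2)
          + ‖emb h - j (v + v')‖ ^ 2 := by
    intro v v' hp h
    have e1 : ‖v - (h : H)‖ ^ 2 = (inner ℂ (v - (h : H)) (v - (h : H)) : ℂ).re := by
      rw [← inner_self_eq_norm_sq (𝕜 := ℂ) (v - (h : H))]; rfl
    have e2 : (inner ℂ (v - (h : H)) (v - (h : H)) : ℂ) + inner ℂ (v' - A h) (v - (h : H))
        = inner ℂ ((v + v') - ((h : H) + A h)) (v - (h : H)) := by
      rw [← inner_add_left]
      congr 1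
      abel
    have e3 : (inner ℂ ((h : H) + A h) v : ℂ) = starRingEnd ℂ (inner ℂ (v + v') ((h : H))) := by
      have step : (inner ℂ v ((h : H) + A h) : ℂ) = inner ℂ (v + v') ((h : H)) := by
        rw [inner_add_right, inner_add_left, ← hp h]
      calc (inner ℂ ((h : H) + A h) v : ℂ)
          = starRingEnd ℂ (inner ℂ v ((h : H) + A h)) := (inner_conj_symm _ _).symm
        _ = starRingEnd ℂ (inner ℂ (v + v') ((h : H))) := by rw [step]
    have e4 : (inner ℂ ((h : H) + A h) ((h : H)) : ℂ).re = ‖emb h‖ ^ 2 := by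
      rw [inner_add_left, hembnorm h, Complex.add_re]
      congr 1
      rw [← inner_self_eq_norm_sq (𝕜 := ℂ) ((h : H))]; rfl
    have e5 : (inner ℂ (v + v') ((h : H)) : ℂ).re = (inner ℂ (j (v + v')) (emb h) : ℂ).re := by
      rw [hembI (v + v') h]
    have e6 : ‖emb h - j (v + v')‖ ^ 2
        = ‖emb h‖ ^ 2 - 2 * (inner ℂ (j (v + v')) (emb h) : ℂ).re + ‖j (v + v')‖ ^ 2 := by
      rw [← inner_self_eq_norm_sq (𝕜 := ℂ) (emb h - j (v + v'))]
      rw [inner_sub_left, inner_sub_right, inner_sub_right]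
      have r1 : (inner ℂ (emb h) (j (v + v')) : ℂ).re = (inner ℂ (j (v + v')) (emb h) : ℂ).re := by
        rw [← inner_conj_symm]; exact Complex.conj_re _
      simp only [RCLike.re_to_complex, Complex.sub_re]
      rw [← inner_self_eq_norm_sq (𝕜 := ℂ) (emb h), ← inner_self_eq_norm_sq (𝕜 := ℂ) (j (v + v'))]
      simp only [RCLike.re_to_complex]
      rw [r1]
      ring
    rw [e1, ← Complex.add_re, e2]
    rw [inner_sub_left, inner_sub_right, inner_sub_right]
    simp only [Complex.sub_re]
    rw [e6]
    have e3re : (inner ℂ ((h : H) + A h) v : ℂ).re = (inner ℂ (v + v') ((h : H)) : ℂ).re := by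
      rw [e3]; exact Complex.conj_re _
    rw [e3re, e4, e5]
    ring
  -- any element of `AF` satisfies the pairing identity and has nonpositive defect
  have hDgen : ∀ (v v' : H), (∃ hf : v ∈ AF.domain, AF ⟨v, hf⟩ = v') →
      (∀ h : A.domain, (inner ℂ v' ((h : H)) : ℂ) = inner ℂ v (A h)) ∧
        ((inner ℂ (v + v') v : ℂ).re - ‖j (v + v')‖ ^ 2 ≤ 0) := by
    intro v v' hv
    obtain ⟨⟨hvb, hvbval⟩, hveps⟩ := (hAF v v').mp hv
    have hvpair : ∀ h : A.domain, (inner ℂ v' ((h : H)) : ℂ) = inner ℂ v (A h) := by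
      intro h
      have := LinearPMap.adjoint_isFormalAdjoint hdense (T := A) ⟨v, hvb⟩ h
      rwa [hvbval] at this
    refine ⟨hvpair, ?_⟩
    by_contra hcon
    push_neg at hcon
    obtain ⟨h, hh⟩ := hveps ((inner ℂ (v + v') v : ℂ).re - ‖j (v + v')‖ ^ 2) hcon
    rw [hstar v v' hvpair h] at hh
    nlinarith [sq_nonneg ‖emb h - j (v + v')‖]
  -- the special elements `ι (j z)` all belong to `AF`
  have hwz : ∀ z : H, ∃ hf : ι (j z) ∈ AF.domain, AF ⟨ι (j z), hf⟩ = z - ι (j z) := by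
    intro z
    have pair0 : ∀ h : A.domain, (inner ℂ (z - ι (j z)) ((h : H)) : ℂ) = inner ℂ (ι (j z)) (A h) := by
      intro h
      have hA : (inner ℂ (ι (j z)) ((h : H) + A h) : ℂ) = inner ℂ z ((h : H)) := by
        rw [hCC (j z) h, ← hembI z h]
      rw [inner_add_right] at hA
      rw [inner_sub_left]
      linear_combination -hA
    apply (hAF (ι (j z)) (z - ι (j z))).mpr
    constructor
    · have hmem : ι (j z) ∈ A.adjoint.domain :=
        LinearPMap.mem_adjoint_domain_of_exists _ ⟨z - ι (j z), pair0⟩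
      exact ⟨hmem, LinearPMap.adjoint_apply_eq hdense ⟨ι (j z), hmem⟩ pair0⟩
    · intro ε hε
      have hsum : ι (j z) + (z - ι (j z)) = z := by abel
      have hD0 : (inner ℂ (ι (j z) + (z - ι (j z))) (ι (j z)) : ℂ).re - ‖j (ι (j z) + (z - ι (j z)))‖ ^ 2 = 0 := by
        rw [hsum]
        have : (inner ℂ z (ι (j z)) : ℂ) = inner ℂ (j z) (j z) := (hj z (j z)).symm
        rw [this]
        rw [show ((inner ℂ (j z) (j z) : ℂ)).re = ‖j z‖ ^ 2 from inner_self_eq_norm_sq (𝕜 := ℂ) (j z)]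
        ring
      obtain ⟨a, ha⟩ := hd.exists_dist_lt (j z) (Real.sqrt_pos.mpr hε)
      refine ⟨a.toD, ?_⟩
      rw [hstar (ι (j z)) (z - ι (j z)) pair0 a.toD, hD0, zero_add]
      have hea : emb a.toD = e a := rfl
      have hdist : ‖emb a.toD - j z‖ < Real.sqrt ε := by
        rw [hea]
        rw [dist_comm] at ha
        rwa [dist_eq_norm] at ha
      have h1 : ‖emb a.toD - j (ι (j z) + (z - ι (j z)))‖ = ‖emb a.toD - j z‖ := by rw [hsum]
      rw [h1]
      calc ‖emb a.toD - j z‖ ^ 2 < Real.sqrt ε ^ 2 := by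
            apply sq_lt_sq' _ hdist
            have : 0 ≤ ‖emb a.toD - j z‖ := norm_nonneg _
            nlinarith [Real.sqrt_nonneg ε]
        _ = ε := Real.sq_sqrt hε.le
  set x := u + u' with hxdef
  have hq : ∀ z : H, (inner ℂ z (u - ι (j x)) : ℂ) = 0 := by
    intro z
    by_contra hq0
    set q := (inner ℂ z (u - ι (j x)) : ℂ) with hqdef
    have hnq : 0 < Complex.normSq q := by
      rw [Complex.normSq_pos]; exact hq0
    set D := (inner ℂ x u : ℂ).re - ‖j x‖ ^ 2 with hDdef
    set s : ℝ := (1 + |D|) / Complex.normSq q with hsdef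
    have hs : 0 < s := by positivity
    set lam : ℂ := (s : ℂ) * q with hlamdef
    obtain ⟨hz, hzval⟩ := hwz z
    have hvmem : u + lam • ι (j z) ∈ AF.domain :=
      AF.domain.add_mem hu (AF.domain.smul_mem lam hz)
    have hvval : AF ⟨u + lam • ι (j z), hvmem⟩ = u' + lam • (z - ι (j z)) := by
      have hsplit : (⟨u + lam • ι (j z), hvmem⟩ : AF.domain)
          = ⟨u, hu⟩ + lam • ⟨ι (j z), hz⟩ := by
        apply Subtype.ext
        simp
      rw [hsplit, AF.map_add, AF.map_smul, hzval, hu'def]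
    have hD2 := (hDgen _ _ ⟨hvmem, hvval⟩).2
    have hvv : (u + lam • ι (j z)) + (u' + lam • (z - ι (j z))) = x + lam • z := by
      rw [hxdef, smul_sub]; abel
    rw [hvv] at hD2
    have hjlin : j (x + lam • z) = j x + lam • j z := by
      rw [map_add, map_smul]
    have hK1 : (inner ℂ (j x) (j z) : ℂ) = inner ℂ x (ι (j z)) := hj x (j z)
    have hK2 : (inner ℂ (j z) (j x) : ℂ) = inner ℂ z (ι (j x)) := hj z (j x)
    have hK3 : (inner ℂ (j z) (j z) : ℂ) = inner ℂ z (ι (j z)) := hj z (j z)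
    have hid : (inner ℂ (x + lam • z) (u + lam • ι (j z)) : ℂ)
        - inner ℂ (j x + lam • j z) (j x + lam • j z)
        = ((inner ℂ x u : ℂ) - inner ℂ (j x) (j x)) + (starRingEnd ℂ lam) * q := by
      rw [hqdef, inner_sub_right]
      simp only [inner_add_left, inner_add_right, inner_smul_left, inner_smul_right,
        hK1, hK2, hK3]
      rw [inner_add_left (j x) (lam • j z), inner_add_right, inner_add_right, inner_smul_left,
        inner_smul_left, inner_smul_right, inner_smul_right, hK1, hK2, hK3]
      ring
    have hnormjx : ‖j x‖ ^ 2 = (inner ℂ (j x) (j x) : ℂ).re := by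
      rw [← inner_self_eq_norm_sq (𝕜 := ℂ) (j x)]; rfl
    have hnormv : ‖j (x + lam • z)‖ ^ 2 = (inner ℂ (j x + lam • j z) (j x + lam • j z) : ℂ).re := by
      rw [hjlin, ← inner_self_eq_norm_sq (𝕜 := ℂ) (j x + lam • j z)]; rfl
    have hrelam : ((starRingEnd ℂ lam) * q).re = s * Complex.normSq q := by
      rw [hlamdef, map_mul]
      have : (starRingEnd ℂ) ((s : ℂ)) = (s : ℂ) := Complex.conj_ofReal s
      rw [this]
      have : (s : ℂ) * (starRingEnd ℂ q) * q = (s : ℂ) * ((starRingEnd ℂ q) * q) := by ring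
      rw [this]
      have hcq : (starRingEnd ℂ q) * q = (Complex.normSq q : ℂ) := by
        rw [mul_comm, Complex.mul_conj]
      rw [hcq, ← Complex.ofReal_mul]
      exact Complex.ofReal_re _
    have hfin : (inner ℂ (x + lam • z) (u + lam • ι (j z)) : ℂ).re - ‖j (x + lam • z)‖ ^ 2
        = D + s * Complex.normSq q := by
      rw [hnormv]
      have := congrArg Complex.re hid
      simp only [Complex.sub_re, Complex.add_re] at this
      rw [hDdef, hnormjx]
      rw [hrelam] at this
      linarith
    rw [hfin] at hD2
    have hmul : s * Complex.normSq q = 1 + |D| := by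
      rw [hsdef, div_mul_cancel₀]
      exact ne_of_gt hnq
    rw [hmul] at hD2
    have h1 : -|D| ≤ D := neg_abs_le D
    linarith
  have hueq : u = ι (j x) := by
    have h0 : u - ι (j x) = 0 := by
      have := hq (u - ι (j x))
      exact inner_self_eq_zero.mp this
    rwa [sub_eq_zero] at h0
  have hDzero : (inner ℂ x u : ℂ).re - ‖j x‖ ^ 2 = 0 := by
    have h1 : (inner ℂ x u : ℂ) = inner ℂ (j x) (j x) := by
      rw [hj x (j x), ← hueq]
    rw [h1, show ((inner ℂ (j x) (j x) : ℂ)).re = ‖j x‖ ^ 2 from inner_self_eq_norm_sq (𝕜 := ℂ) (j x)]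
    ring
  obtain ⟨a, ha⟩ := hd.exists_dist_lt (j x) (Real.sqrt_pos.mpr hδ)
  have hdist : ‖emb a.toD - j x‖ < Real.sqrt δ := by
    have hea : emb a.toD = e a := rfl
    rw [hea]
    rw [dist_comm, dist_eq_norm] at ha
    exact ha
  have hsq : ‖emb a.toD - j x‖ ^ 2 < δ := by
    calc ‖emb a.toD - j x‖ ^ 2 < Real.sqrt δ ^ 2 := by
          apply sq_lt_sq' _ hdist
          nlinarith [Real.sqrt_nonneg δ, norm_nonneg (emb a.toD - j x)]
      _ = δ := Real.sq_sqrt hδ.le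
  refine ⟨a.toD, ?_, ?_, ?_⟩
  · have h1 : u - (a.toD : H) = ι (j x - e a) := by
      rw [map_sub]
      have h2 : ι (e a) = (a.toD : H) := hιe a
      rw [h2, ← hueq]
    have h3 : ‖u - (a.toD : H)‖ ≤ ‖emb a.toD - j x‖ := by
      rw [h1, ← norm_neg (emb a.toD - j x)]
      have h4 : -(emb a.toD - j x) = j x - e a := by
        have hea : emb a.toD = e a := rfl
        rw [hea]; abel
      rw [h4]
      exact hιnorm _
    nlinarith [norm_nonneg (u - (a.toD : H)), norm_nonneg (emb a.toD - j x)]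
  · rw [hstar u u' hpair a.toD, ← hxdef, hDzero, zero_add]
    positivity
  · rw [hstar u u' hpair a.toD, ← hxdef, hDzero, zero_add]
    exact hsq


theorem friedrichs_extension_pt_homogeneous'
    {T : Type*} (U : T → (H ≃ₗᵢ[ℂ] H)) (g : T → T) (p : T → ℝ)
    (hadj : ∀ (t : T) (x y : H), (inner ℂ (U t x) y : ℂ) = inner ℂ x (U (g t) y))
    (A : H →ₗ.[ℂ] H) (hdense : Dense (A.domain : Set H))
    (hsym : ∀ x y : A.domain, (inner ℂ (A x) (y : H) : ℂ) = inner ℂ (x : H) (A y))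
    (hnonneg : ∀ x : A.domain, 0 ≤ (inner ℂ (x : H) (A x) : ℂ).re)
    (hhom : ∀ t : T, (∀ x : H, x ∈ A.domain ↔ U t x ∈ A.domain) ∧
      ∀ (x : H) (hx : x ∈ A.domain) (hx' : U t x ∈ A.domain),
        U t (A ⟨x, hx⟩) = (p t : ℂ) • A ⟨U t x, hx'⟩)
    (AF : H →ₗ.[ℂ] H)
    (hAF : ∀ (f f' : H),
      (∃ hf : f ∈ AF.domain, AF ⟨f, hf⟩ = f') ↔
        ((∃ hf : f ∈ A.adjoint.domain, A.adjoint ⟨f, hf⟩ = f') ∧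
          ∀ ε : ℝ, 0 < ε → ∃ h : A.domain,
            ‖f - (h : H)‖ ^ 2 + (inner ℂ (f' - A h) (f - (h : H)) : ℂ).re < ε)) :
    ∀ t : T, (∀ x : H, x ∈ AF.domain ↔ U t x ∈ AF.domain) ∧
      ∀ (x : H) (hx : x ∈ AF.domain) (hx' : U t x ∈ AF.domain),
        U t (AF ⟨x, hx⟩) = (p t : ℂ) • AF ⟨U t x, hx'⟩ := by
  classical
  have hgs : ∀ (t : T) (y : H), U (g t) y = (U t).symm y := by
    intro t y
    apply ext_inner_left ℂ
    intro v
    rw [← hadj t v y]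
    calc (inner ℂ (U t v) y : ℂ) = inner ℂ (U t v) (U t ((U t).symm y)) := by
          rw [LinearIsometryEquiv.apply_symm_apply]
      _ = inner ℂ v ((U t).symm y) := LinearIsometryEquiv.inner_map_map _ _ _
  have hinv : ∀ (t : T) (y : H), U (g t) (U t y) = y := by
    intro t y; rw [hgs]; exact (U t).symm_apply_apply y
  by_cases hA0 : ∀ h : A.domain, A h = 0
  · -- degenerate case: `A = 0`, hence `AF = 0` on all of `H`
    have hall : ∀ f : H, ∃ hf : f ∈ AF.domain, AF ⟨f, hf⟩ = 0 := by
      intro f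
      apply (hAF f 0).mpr
      constructor
      · have hp0 : ∀ h : A.domain, (inner ℂ (0 : H) ((h : H)) : ℂ) = inner ℂ f (A h) := by
          intro h; rw [hA0 h]; simp
        have hmem : f ∈ A.adjoint.domain :=
          LinearPMap.mem_adjoint_domain_of_exists _ ⟨0, hp0⟩
        exact ⟨hmem, LinearPMap.adjoint_apply_eq hdense ⟨f, hmem⟩ hp0⟩
      · intro ε hε
        obtain ⟨y, hy1, hy2⟩ := Metric.dense_iff.mp hdense f (Real.sqrt ε)
          (Real.sqrt_pos.mpr hε)
        refine ⟨⟨y, hy2⟩, ?_⟩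
        rw [hA0 ⟨y, hy2⟩]
        have hdy : ‖f - y‖ < Real.sqrt ε := by
          rw [Metric.mem_ball, dist_comm, dist_eq_norm] at hy1
          exact hy1
        have : ‖f - y‖ ^ 2 < ε := by
          calc ‖f - y‖ ^ 2 < Real.sqrt ε ^ 2 := by
                apply sq_lt_sq' _ hdy
                nlinarith [Real.sqrt_nonneg ε, norm_nonneg (f - y)]
            _ = ε := Real.sq_sqrt hε.le
        simpa using this
    intro t
    constructor
    · intro x0
      constructor
      · intro _; obtain ⟨hm, _⟩ := hall (U t x0); exact hm
      · intro _; obtain ⟨hm, _⟩ := hall x0; exact hm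
    · intro x0 hx hx'
      obtain ⟨hm1, hv1⟩ := hall x0
      obtain ⟨hm2, hv2⟩ := hall (U t x0)
      have e1 : AF ⟨x0, hx⟩ = 0 := hv1
      have e2 : AF ⟨U t x0, hx'⟩ = 0 := hv2
      rw [e1, e2]
      simp
  · -- nondegenerate case
    push_neg at hA0
    obtain ⟨x₀, hx₀⟩ := hA0
    have hq1 : ∀ s : T, (p s : ℂ) * (p (g s) : ℂ) = 1 := by
      intro s
      have d1 : U s (x₀ : H) ∈ A.domain := ((hhom s).1 x₀).mp x₀.2
      have h1 := (hhom s).2 x₀ x₀.2 d1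
      have d2 : U (g s) (U s (x₀ : H)) ∈ A.domain := ((hhom (g s)).1 _).mp d1
      have h2 := (hhom (g s)).2 (U s (x₀ : H)) d1 d2
      have h3 : (⟨U (g s) (U s (x₀ : H)), d2⟩ : A.domain) = x₀ := Subtype.ext (hinv s x₀)
      rw [h3] at h2
      have h4 := congrArg (U (g s)) h1
      rw [hinv s (A x₀), map_smul, h2, smul_smul] at h4
      have h5 : (1 - (p s : ℂ) * (p (g s) : ℂ)) • A x₀ = 0 := by
        rw [sub_smul, one_smul, sub_eq_zero]
        exact h4
      rcases smul_eq_zero.mp h5 with hc | hc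
      · have := sub_eq_zero.mp hc
        exact this.symm
      · exact absurd hc hx₀
    have hmain : ∀ (s : T) (v : H) (hv : v ∈ AF.domain),
        ∃ hw : U s v ∈ AF.domain,
          AF ⟨U s v, hw⟩ = ((p (g s) : ℂ)) • U s (AF ⟨v, hv⟩) := by
      intro s v hv
      set c : ℝ := p (g s) with hcdef
      set v' := AF ⟨v, hv⟩ with hv'def
      obtain ⟨⟨hvb, hvbval⟩, _⟩ := (hAF v v').mp ⟨hv, rfl⟩
      have hpair : ∀ h : A.domain, (inner ℂ v' ((h : H)) : ℂ) = inner ℂ v (A h) := by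
        intro h
        have := LinearPMap.adjoint_isFormalAdjoint hdense (T := A) ⟨v, hvb⟩ h
        rwa [hvbval] at this
      have hdom : ∀ h : A.domain, U s (h : H) ∈ A.domain := fun h => ((hhom s).1 h).mp h.2
      have hdomg : ∀ h : A.domain, U (g s) (h : H) ∈ A.domain :=
        fun h => ((hhom (g s)).1 h).mp h.2
      have hcps : (c : ℂ) * (p s : ℂ) = 1 := by rw [mul_comm]; exact hq1 s
      have hAU : ∀ h : A.domain, A ⟨U s (h : H), hdom h⟩ = (c : ℂ) • U s (A h) := by
        intro h
        have h1 := (hhom s).2 h h.2 (hdom h)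
        calc A ⟨U s (h : H), hdom h⟩
            = ((c : ℂ) * (p s : ℂ)) • A ⟨U s (h : H), hdom h⟩ := by rw [hcps, one_smul]
          _ = (c : ℂ) • ((p s : ℂ) • A ⟨U s (h : H), hdom h⟩) := by rw [smul_smul]
          _ = (c : ℂ) • U s (A h) := by rw [← h1]
      have hpairU : ∀ h : A.domain,
          (inner ℂ ((c : ℂ) • U s v') ((h : H)) : ℂ) = inner ℂ (U s v) (A h) := by
        intro h
        have hgh : U (g s) (h : H) ∈ A.domain := hdomg h
        have h1 := (hhom (g s)).2 h h.2 hgh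
        have : (inner ℂ (U s v) (A h) : ℂ) = inner ℂ ((c : ℂ) • U s v') ((h : H)) := by
          calc (inner ℂ (U s v) (A h) : ℂ)
              = inner ℂ v (U (g s) (A h)) := hadj s v (A h)
            _ = inner ℂ v ((c : ℂ) • A ⟨U (g s) (h : H), hgh⟩) := by rw [h1]
            _ = (c : ℂ) * inner ℂ v (A ⟨U (g s) (h : H), hgh⟩) := by rw [inner_smul_right]
            _ = (c : ℂ) * inner ℂ v' ((U (g s) (h : H))) := by
                rw [← hpair ⟨U (g s) (h : H), hgh⟩]
            _ = (c : ℂ) * inner ℂ (U s v') ((h : H)) := by rw [hadj s v' (h : H)]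
            _ = inner ℂ ((c : ℂ) • U s v') ((h : H)) := by
                rw [inner_smul_left, Complex.conj_ofReal]
        exact this.symm
      have hmem : U s v ∈ A.adjoint.domain :=
        LinearPMap.mem_adjoint_domain_of_exists _ ⟨(c : ℂ) • U s v', hpairU⟩
      have hval : A.adjoint ⟨U s v, hmem⟩ = (c : ℂ) • U s v' :=
        LinearPMap.adjoint_apply_eq hdense _ hpairU
      refine (hAF _ _).mpr ⟨⟨hmem, hval⟩, ?_⟩
      intro ε hε
      set δ := ε / (1 + |1 - c| + |c|) with hδdef
      have hKpos : 0 < 1 + |1 - c| + |c| := by positivity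
      have hδpos : 0 < δ := by rw [hδdef]; positivity
      obtain ⟨h, hn, hJ0, hJ⟩ := friedrichs_key A hdense hsym hnonneg AF hAF v hv δ hδpos
      rw [← hv'def] at hJ0 hJ
      refine ⟨⟨U s (h : H), hdom h⟩, ?_⟩
      have hnorm : ‖U s v - U s (h : H)‖ = ‖v - (h : H)‖ := by
        rw [← map_sub]; exact (U s).norm_map _
      have hterm : (inner ℂ ((c : ℂ) • U s v' - A ⟨U s (h : H), hdom h⟩)
            (U s v - U s (h : H)) : ℂ)
          = (c : ℂ) * inner ℂ (v' - A h) (v - (h : H)) := by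
        rw [hAU h, ← smul_sub, ← map_sub (U s), ← map_sub (U s), inner_smul_left,
          Complex.conj_ofReal, LinearIsometryEquiv.inner_map_map]
      have hre : ((c : ℂ) * inner ℂ (v' - A h) (v - (h : H))).re
          = c * (inner ℂ (v' - A h) (v - (h : H)) : ℂ).re := by
        simp [Complex.mul_re]
      have hεδ : ε = δ * (1 + |1 - c| + |c|) := by
        rw [hδdef]; field_simp
      show ‖U s v - U s (h : H)‖ ^ 2
          + (inner ℂ ((c : ℂ) • U s v' - A ⟨U s (h : H), hdom h⟩)
              (U s v - U s (h : H)) : ℂ).re < ε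
      rw [hnorm, hterm, hre, hεδ]
      set N := ‖v - (h : H)‖ ^ 2 with hNdef
      set R := (inner ℂ (v' - A h) (v - (h : H)) : ℂ).re with hRdef
      have hN0 : 0 ≤ N := sq_nonneg _
      have hc1 : 1 - c ≤ |1 - c| := le_abs_self _
      have hc2 : c ≤ |c| := le_abs_self _
      have t1 : |1 - c| * N ≤ |1 - c| * δ :=
        mul_le_mul_of_nonneg_left hn.le (abs_nonneg _)
      have t2 : |c| * (N + R) ≤ |c| * δ :=
        mul_le_mul_of_nonneg_left hJ.le (abs_nonneg _)
      nlinarith [mul_nonneg (sub_nonneg.mpr hc1) hN0, mul_nonneg (sub_nonneg.mpr hc2) hJ0]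
    intro t
    constructor
    · intro x1
      constructor
      · intro hx
        obtain ⟨hw, _⟩ := hmain t x1 hx
        exact hw
      · intro hx
        obtain ⟨hw, _⟩ := hmain (g t) (U t x1) hx
        rwa [hinv t x1] at hw
    · intro x1 hx hx'
      obtain ⟨hw, hwval⟩ := hmain t x1 hx
      have hsame : AF ⟨U t x1, hx'⟩ = ((p (g t) : ℂ)) • U t (AF ⟨x1, hx⟩) := hwval
      rw [hsame, smul_smul, hq1 t, one_smul]
end Key
end FriedrichsAux

/-- the Friedrichs extension `AF` of a densely defined nonnegative
symmetric `p(t)`-homogeneous operator `A` is `p(t)`-homogeneous.  `AF` is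
characterized by: `{f, f'} ∈ AF` iff `{f, f'} ∈ A*` and
`inf { ‖f − h‖² + re (f' − Ah, f − h) : h ∈ D(A) } = 0`. -/
theorem friedrichs_extension_pt_homogeneous
    {H : Type*} [NormedAddCommGroup H] [InnerProductSpace ℂ H] [CompleteSpace H]
    {T : Type*} (U : T → (H ≃ₗᵢ[ℂ] H)) (g : T → T) (p : T → ℝ)
    (hadj : ∀ (t : T) (x y : H), (inner ℂ (U t x) y : ℂ) = inner ℂ x (U (g t) y))
    (A : H →ₗ.[ℂ] H) (hdense : Dense (A.domain : Set H))
    (hsym : ∀ x y : A.domain, (inner ℂ (A x) (y : H) : ℂ) = inner ℂ (x : H) (A y))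
    (hnonneg : ∀ x : A.domain, 0 ≤ (inner ℂ (x : H) (A x) : ℂ).re)
    (hhom : IsPtHomogeneous U p A)
    (AF : H →ₗ.[ℂ] H)
    (hAF : ∀ (f f' : H),
      (∃ hf : f ∈ AF.domain, AF ⟨f, hf⟩ = f') ↔
        ((∃ hf : f ∈ A.adjoint.domain, A.adjoint ⟨f, hf⟩ = f') ∧
          ∀ ε : ℝ, 0 < ε → ∃ h : A.domain,
            ‖f - (h : H)‖ ^ 2 + (inner ℂ (f' - A h) (f - (h : H)) : ℂ).re < ε)) :
    IsPtHomogeneous U p AF := by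
  exact friedrichs_extension_pt_homogeneous' U g p hadj A hdense hsym hnonneg hhom AF hAF
end

section
/- Let A be a densely defined nonnegative symmetric operator that is p(t)-homogeneous with respect to a family of unitary operators {U_t} closed under adjoints. Then the Krein–von Neumann extension A_N of A is also p(t)-homogeneous with respect to {U_t}. -/
open InnerProductSpace

set_option maxHeartbeats 4000000 in
/-- the Krein–von Neumann extension `AN` of a densely defined
nonnegative symmetric `p(t)`-homogeneous operator `A` is `p(t)`-homogeneous.
`AN` is characterized by: `{f, f'} ∈ AN` iff `{f, f'} ∈ A*` and
`inf { ‖f' − Ah‖² + re (f' − Ah, f − h) : h ∈ D(A) } = 0`. -/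
theorem krein_von_neumann_extension_pt_homogeneous
    {H : Type*} [NormedAddCommGroup H] [InnerProductSpace ℂ H] [CompleteSpace H]
    {T : Type*} (U : T → (H ≃ₗᵢ[ℂ] H)) (g : T → T) (p : T → ℝ)
    (hadj : ∀ (t : T) (x y : H), (inner ℂ (U t x) y : ℂ) = inner ℂ x (U (g t) y))
    (A : H →ₗ.[ℂ] H) (hdense : Dense (A.domain : Set H))
    (hsym : ∀ x y : A.domain, (inner ℂ (A x) (y : H) : ℂ) = inner ℂ (x : H) (A y))
    (hnonneg : ∀ x : A.domain, 0 ≤ (inner ℂ (x : H) (A x) : ℂ).re)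
    (hhom : IsPtHomogeneous U p A)
    (AN : H →ₗ.[ℂ] H)
    (hAN : ∀ (f f' : H),
      (∃ hf : f ∈ AN.domain, AN ⟨f, hf⟩ = f') ↔
        ((∃ hf : f ∈ A.adjoint.domain, A.adjoint ⟨f, hf⟩ = f') ∧
          ∀ ε : ℝ, 0 < ε → ∃ h : A.domain,
            ‖f' - A h‖ ^ 2 + (inner ℂ (f' - A h) (f - (h : H)) : ℂ).re < ε)) :
    IsPtHomogeneous U p AN := by
  classical
  -- Inverse relations for the unitaries
  have hWV : ∀ (s : T) (y : H), U (g s) (U s y) = y := by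
    intro s y
    apply ext_inner_left ℂ
    intro v
    rw [← hadj s v (U s y), LinearIsometryEquiv.inner_map_map]
  have hVW : ∀ (s : T) (y : H), U s (U (g s) y) = y := by
    intro s y
    apply ext_inner_right ℂ
    intro v
    rw [hadj s (U (g s) y) v, LinearIsometryEquiv.inner_map_map]
  -- density extension
  have hext0 : ∀ w : H, (∀ h : A.domain, (inner ℂ w (h : H) : ℂ) = 0) → w = 0 := by
    intro w hw
    exact hdense.eq_zero_of_inner_left ℂ (fun v hv => hw ⟨v, hv⟩)
  -- formal adjoint property
  have hFA : ∀ (y : A.adjoint.domain) (x : A.domain),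
      (inner ℂ (A.adjoint y) (x : H) : ℂ) = inner ℂ (y : H) (A x) :=
    LinearPMap.adjoint_isFormalAdjoint hdense
  -- constructing adjoint memberships
  have hmkadj : ∀ (y w : H), (∀ x : A.domain, (inner ℂ w (x : H) : ℂ) = inner ℂ y (A x)) →
      ∃ hy : y ∈ A.adjoint.domain, A.adjoint ⟨y, hy⟩ = w := by
    intro y w hw
    have hy : y ∈ A.adjoint.domain := LinearPMap.mem_adjoint_domain_of_exists y ⟨w, hw⟩
    exact ⟨hy, LinearPMap.adjoint_apply_eq hdense ⟨y, hy⟩ hw⟩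
  -- the quadratic expansion
  have hexpand : ∀ (E F u z : H) (τ : ℝ),
      ‖E + (τ:ℂ) • F‖ ^ 2 + (inner ℂ (E + (τ:ℂ) • F) (u + (τ:ℂ) • z) : ℂ).re
      = (‖F‖ ^ 2 + (inner ℂ F z : ℂ).re) * (τ * τ)
        + (2 * (inner ℂ E F : ℂ).re + (inner ℂ E z : ℂ).re + (inner ℂ F u : ℂ).re) * τ
        + (‖E‖ ^ 2 + (inner ℂ E u : ℂ).re) := by
    intro E F u z τ
    rw [norm_add_sq (𝕜 := ℂ)]
    simp only [inner_add_left, inner_add_right, inner_smul_left, inner_smul_right, norm_smul,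
      Complex.add_re, Complex.mul_re, Complex.conj_ofReal, Complex.ofReal_re,
      Complex.ofReal_im, Complex.norm_real, RCLike.re_to_complex, Real.norm_eq_abs,
      mul_pow, sq_abs]
    ring
  -- value of AN is the adjoint value
  have hANadj : ∀ (y : H) (hy : y ∈ AN.domain),
      ∃ hf : y ∈ A.adjoint.domain, A.adjoint ⟨y, hf⟩ = AN ⟨y, hy⟩ :=
    fun y hy => ((hAN y (AN ⟨y, hy⟩)).mp ⟨hy, rfl⟩).1
  have hANinf : ∀ (y : H) (hy : y ∈ AN.domain), ∀ ε : ℝ, 0 < ε → ∃ h : A.domain,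
      ‖AN ⟨y, hy⟩ - A h‖ ^ 2 + (inner ℂ (AN ⟨y, hy⟩ - A h) (y - (h : H)) : ℂ).re < ε :=
    fun y hy => ((hAN y (AN ⟨y, hy⟩)).mp ⟨hy, rfl⟩).2
  by_cases hdeg : ∀ k : A.domain, A k = 0
  · -- degenerate case : A = 0 on its domain
    have hadj0 : ∀ y : H, ∃ hy : y ∈ A.adjoint.domain, A.adjoint ⟨y, hy⟩ = 0 := by
      intro y
      apply hmkadj
      intro x
      rw [hdeg x, inner_zero_left, inner_zero_right]
    have hmem : ∀ y : H, y ∈ AN.domain := by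
      intro y
      obtain ⟨hy, hy0⟩ := hadj0 y
      obtain ⟨hm, -⟩ := (hAN y 0).mpr ⟨⟨hy, hy0⟩, by
        intro ε hε
        refine ⟨0, ?_⟩
        simp [hdeg (0 : A.domain)]
        exact hε⟩
      exact hm
    have hval0 : ∀ (y : H) (hy : y ∈ AN.domain), AN ⟨y, hy⟩ = 0 := by
      intro y hy
      obtain ⟨hf, hfe⟩ := hANadj y hy
      obtain ⟨hy2, h0⟩ := hadj0 y
      rw [← hfe]
      exact h0
    intro t
    refine ⟨fun x => ⟨fun _ => hmem _, fun _ => hmem _⟩, ?_⟩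
    intro x hx hx'
    rw [hval0 x hx, hval0 _ hx', map_zero, smul_zero]
  · -- nondegenerate case
    push_neg at hdeg
    -- A-domain transport and homogeneity in convenient form
    have hdom : ∀ (s : T) (k : A.domain), U s (k : H) ∈ A.domain :=
      fun s k => ((hhom s).1 k).mp k.2
    have hAV : ∀ (s : T) (k : A.domain),
        U s (A k) = (p s : ℂ) • A ⟨U s (k : H), hdom s k⟩ :=
      fun s k => (hhom s).2 k k.2 (hdom s k)
    -- a strictly positive vector
    have hx₀ : ∃ x₀ : A.domain, 0 < (inner ℂ (x₀ : H) (A x₀) : ℂ).re := by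
      by_contra hcon
      push_neg at hcon
      have hzero : ∀ x : A.domain, (inner ℂ (x : H) (A x) : ℂ).re = 0 :=
        fun x => le_antisymm (hcon x) (hnonneg x)
      have hre : ∀ x y : A.domain, (inner ℂ (x : H) (A y) : ℂ).re = 0 := by
        intro x y
        have h1 := hzero (x + y)
        rw [LinearPMap.map_add, Submodule.coe_add, inner_add_left, inner_add_right,
          inner_add_right] at h1
        have h2 : (inner ℂ (y : H) (A x) : ℂ) = (starRingEnd ℂ) (inner ℂ (x : H) (A y)) := by
          rw [← hsym x y, inner_conj_symm]
        have h3 : (inner ℂ (y : H) (A x) : ℂ).re = (inner ℂ (x : H) (A y) : ℂ).re := by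
          rw [h2, Complex.conj_re]
        simp only [Complex.add_re] at h1
        rw [hzero x, hzero y, h3] at h1
        linarith
      have hB : ∀ x y : A.domain, (inner ℂ (x : H) (A y) : ℂ) = 0 := by
        intro x y
        have h2 := hre (Complex.I • x) y
        rw [Submodule.coe_smul, inner_smul_left] at h2
        simp only [Complex.conj_I, neg_mul, Complex.neg_re, Complex.mul_re, Complex.I_re,
          Complex.I_im] at h2
        have him : (inner ℂ (x : H) (A y) : ℂ).im = 0 := by
          have := h2
          ring_nf at this ⊢
          linarith [this]
        have hrr := hre x y
        exact Complex.ext hrr him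
      obtain ⟨k₀, hk₀⟩ := hdeg
      apply hk₀
      apply hdense.eq_zero_of_inner_right ℂ
      intro v hv
      exact hB ⟨v, hv⟩ k₀
    obtain ⟨x₀, hx₀pos⟩ := hx₀
    -- positivity of p
    have hppos : ∀ s : T, 0 < p s := by
      intro s
      have h2 : (inner ℂ (U s (x₀ : H)) (U s (A x₀)) : ℂ) = inner ℂ (x₀ : H) (A x₀) :=
        LinearIsometryEquiv.inner_map_map _ _ _
      rw [hAV s x₀, inner_smul_right] at h2
      have h3 : p s * (inner ℂ (U s (x₀ : H)) (A ⟨U s (x₀ : H), hdom s x₀⟩) : ℂ).re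
          = (inner ℂ (x₀ : H) (A x₀) : ℂ).re := by
        rw [← h2]
        simp [Complex.mul_re]
      have h4 := hnonneg ⟨U s (x₀ : H), hdom s x₀⟩
      nlinarith [hx₀pos]
    -- p s * p (g s) = 1
    have hp1 : ∀ s : T, p s * p (g s) = 1 := by
      intro s
      have hAx₀ : A x₀ ≠ 0 := by
        intro h0
        rw [h0] at hx₀pos
        simp at hx₀pos
      have e1 : U (g s) (U s (A x₀)) = A x₀ := hWV s _
      have h2 := hAV (g s) ⟨U s (x₀ : H), hdom s x₀⟩
      have e3 : A ⟨U (g s) ((⟨U s (x₀ : H), hdom s x₀⟩ : A.domain) : H),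
          hdom (g s) ⟨U s (x₀ : H), hdom s x₀⟩⟩ = A x₀ := by
        congr 1
        exact Subtype.ext (hWV s (x₀ : H))
      rw [e3] at h2
      have hchain : A x₀ = ((p s * p (g s) : ℝ) : ℂ) • A x₀ := by
        calc A x₀ = U (g s) (U s (A x₀)) := e1.symm
          _ = U (g s) ((p s : ℂ) • A ⟨U s (x₀ : H), hdom s x₀⟩) := by rw [hAV s x₀]
          _ = (p s : ℂ) • U (g s) (A ⟨U s (x₀ : H), hdom s x₀⟩) := by
              rw [LinearIsometryEquiv.map_smul]
          _ = (p s : ℂ) • ((p (g s) : ℂ) • A x₀) := by rw [h2]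
          _ = ((p s * p (g s) : ℝ) : ℂ) • A x₀ := by
              rw [smul_smul]
              norm_cast
      have : (((p s * p (g s) : ℝ) : ℂ) - 1) • A x₀ = 0 := by
        rw [sub_smul, one_smul, ← hchain, sub_self]
      rcases smul_eq_zero.mp this with h | h
      · have : ((p s * p (g s) : ℝ) : ℂ) = 1 := by
          have := sub_eq_zero.mp h
          exact this
        exact_mod_cast this
      · exact absurd h hAx₀
    -- adjoint transport
    have hadjT : ∀ (s : T) (y : H) (hy : y ∈ A.adjoint.domain),
        ∃ hy' : U s y ∈ A.adjoint.domain,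
          A.adjoint ⟨U s y, hy'⟩ = (p (g s) : ℂ) • U s (A.adjoint ⟨y, hy⟩) := by
      intro s y hy
      apply hmkadj
      intro x
      have lhs1 : (inner ℂ ((p (g s) : ℂ) • U s (A.adjoint ⟨y, hy⟩)) (x : H) : ℂ)
          = (p (g s) : ℂ) * inner ℂ (y : H) (A ⟨U (g s) (x : H), hdom (g s) x⟩) := by
        rw [inner_smul_left, Complex.conj_ofReal, hadj s (A.adjoint ⟨y, hy⟩) (x : H)]
        congr 1
        exact hFA ⟨y, hy⟩ ⟨U (g s) (x : H), hdom (g s) x⟩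
      have rhs1 : (inner ℂ (U s y) (A x) : ℂ)
          = (p (g s) : ℂ) * inner ℂ (y : H) (A ⟨U (g s) (x : H), hdom (g s) x⟩) := by
        rw [hadj s y (A x), hAV (g s) x, inner_smul_right]
      rw [lhs1, rhs1]
    -- value clause transport
    have hval : ∀ (s : T) (y : H) (hy : y ∈ AN.domain) (hy' : U s y ∈ AN.domain),
        U s (AN ⟨y, hy⟩) = (p s : ℂ) • AN ⟨U s y, hy'⟩ := by
      intro s y hy hy'
      obtain ⟨hf, hfe⟩ := hANadj y hy
      obtain ⟨hf', hfe'⟩ := hANadj (U s y) hy'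
      obtain ⟨hf'', hfe''⟩ := hadjT s y hf
      have hcomb : AN ⟨U s y, hy'⟩ = (p (g s) : ℂ) • U s (AN ⟨y, hy⟩) := by
        rw [← hfe']
        rw [show A.adjoint ⟨U s y, hf'⟩ = (p (g s) : ℂ) • U s (A.adjoint ⟨y, hf⟩) from hfe'']
        rw [hfe]
      rw [hcomb, smul_smul]
      have : ((p s : ℂ) * (p (g s) : ℂ)) = 1 := by
        have := hp1 s
        push_cast
        exact_mod_cast congrArg (fun r : ℝ => (r : ℂ)) this
      rw [this, one_smul]
    -- THE KEY TRANSPORT LEMMA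
    have hkey : ∀ (s : T) (y : H), y ∈ AN.domain → U s y ∈ AN.domain := by
      by_cases hPOS : ∀ (z : A.adjoint.domain) (m : A.domain),
          0 ≤ ‖A.adjoint z - A m‖ ^ 2 + (inner ℂ (A.adjoint z - A m) ((z : H) - (m : H)) : ℂ).re
      · -- POSITIVE case
        intro s y hy
        obtain ⟨hf, hfe⟩ := hANadj y hy
        obtain ⟨hf'', hADJ⟩ := hadjT s y hf
        have hcpos : 0 < p (g s) := hppos (g s)
        have hAVc : ∀ h : A.domain, A ⟨U s (h : H), hdom s h⟩ = (p (g s) : ℂ) • U s (A h) := by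
          intro h
          rw [hAV s h, smul_smul]
          have h2 : ((p (g s) : ℂ) * (p s : ℂ)) = 1 := by
            rw [mul_comm]
            exact_mod_cast congrArg (fun r : ℝ => (r : ℂ)) (hp1 s)
          rw [h2, one_smul]
        have htrans : ∀ h : A.domain,
            ‖(p (g s) : ℂ) • U s (AN ⟨y, hy⟩) - A ⟨U s (h : H), hdom s h⟩‖ ^ 2
              + (inner ℂ ((p (g s) : ℂ) • U s (AN ⟨y, hy⟩) - A ⟨U s (h : H), hdom s h⟩)
                  (U s y - U s (h : H)) : ℂ).re
            = (p (g s)) ^ 2 * ‖AN ⟨y, hy⟩ - A h‖ ^ 2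
              + p (g s) * (inner ℂ (AN ⟨y, hy⟩ - A h) (y - (h : H)) : ℂ).re := by
          intro h
          rw [hAVc h, ← smul_sub, ← LinearIsometryEquiv.map_sub, ← LinearIsometryEquiv.map_sub,
            norm_smul, inner_smul_left, Complex.conj_ofReal, LinearIsometryEquiv.norm_map,
            LinearIsometryEquiv.inner_map_map]
          simp only [Complex.norm_real, Real.norm_eq_abs, mul_pow, sq_abs, Complex.mul_re,
            Complex.ofReal_re, Complex.ofReal_im, zero_mul, sub_zero]
        -- an auxiliary fact used to rule out approximate defect elements
        have hqgen : ∀ (c' : ℝ) (v : H) (hv : v ∈ A.adjoint.domain),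
            A.adjoint ⟨v, hv⟩ = ((-c' : ℝ) : ℂ) • v → 0 ≤ c' ^ 2 * ‖v‖ ^ 2 - c' * ‖v‖ ^ 2 := by
          intro c' v hv hval'
          have hq := hPOS ⟨v, hv⟩ 0
          rw [hval', A.map_zero] at hq
          simp only [Submodule.coe_zero, sub_zero] at hq
          rw [norm_smul, inner_smul_left, Complex.conj_ofReal,
            Complex.norm_real, Real.norm_eq_abs] at hq
          have h3 : ((inner ℂ v v : ℂ)).re = ‖v‖ ^ 2 := by
            have h4 := @inner_self_eq_norm_sq ℂ _ _ _ _ v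
            rwa [RCLike.re_to_complex] at h4
          have hre : ((((-c') : ℝ) : ℂ) * (inner ℂ v v : ℂ)).re = -c' * ‖v‖ ^ 2 := by
            rw [Complex.mul_re, Complex.ofReal_re, Complex.ofReal_im, zero_mul, sub_zero, h3]
          rw [hre] at hq
          have habs : (|(-c')| * ‖v‖) ^ 2 = c' ^ 2 * ‖v‖ ^ 2 := by
            rw [mul_pow, sq_abs, neg_pow]
            ring
          rw [habs] at hq
          linarith
        have hmain : ∀ ε : ℝ, 0 < ε → ∃ h : A.domain,
            ‖(p (g s) : ℂ) • U s (AN ⟨y, hy⟩) - A h‖ ^ 2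
              + (inner ℂ ((p (g s) : ℂ) • U s (AN ⟨y, hy⟩) - A h) (U s y - (h : H)) : ℂ).re < ε := by
          intro ε hε
          by_cases hc1 : p (g s) = 1
          · -- trivial scaling case
            obtain ⟨h, hh⟩ := hANinf y hy ε hε
            refine ⟨⟨U s (h : H), hdom s h⟩, ?_⟩
            have hcoe2 : ((⟨U s (h : H), hdom s h⟩ : A.domain) : H) = U s (h : H) := rfl
            rw [hcoe2, htrans h, hc1]
            simpa using hh
          ·
          -- density of the range of A + 1
           have hdense1 : ∀ w : H, (∀ m : A.domain, (inner ℂ w ((A m) + (m : H)) : ℂ) = 0) → w = 0 := by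
            intro w hw
            obtain ⟨hww, hwe⟩ : ∃ hww : w ∈ A.adjoint.domain,
                A.adjoint ⟨w, hww⟩ = ((-(1:ℝ) : ℝ) : ℂ) • w := by
              apply hmkadj
              intro m
              have h1 := hw m
              rw [inner_add_right] at h1
              rw [inner_smul_left]
              simp only [Complex.ofReal_neg, Complex.ofReal_one, map_neg, map_one, neg_one_mul]
              linear_combination -h1
            have hnorm0 : ‖w‖ ^ 2 ≤ 0 := by
              rcases lt_or_gt_of_ne hc1 with hlt | hgt
              · -- p (g s) < 1 : transport by U s
                obtain ⟨hz', he'⟩ := hadjT s w hww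
                have hval' : A.adjoint ⟨U s w, hz'⟩ = ((-(p (g s)) : ℝ) : ℂ) • U s w := by
                  rw [he', hwe]
                  rw [LinearIsometryEquiv.map_smul, smul_smul]
                  push_cast
                  ring_nf
                have h0 := hqgen (p (g s)) (U s w) hz' hval'
                rw [LinearIsometryEquiv.norm_map] at h0
                nlinarith [h0, hcpos, hlt, sq_nonneg ‖w‖, mul_pos hcpos (sub_pos.mpr hlt)]
              · -- p (g s) > 1 : transport by U (g s)
                have hpgg : p (g (g s)) = p s := by
                  have h1 : p (g s) * p (g (g s)) = 1 := hp1 (g s)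
                  have h2 : p (g s) * p s = 1 := by rw [mul_comm]; exact hp1 s
                  exact mul_left_cancel₀ (ne_of_gt hcpos) (h1.trans h2.symm)
                obtain ⟨hz', he'⟩ := hadjT (g s) w hww
                have hval' : A.adjoint ⟨U (g s) w, hz'⟩ = ((-(p s) : ℝ) : ℂ) • U (g s) w := by
                  rw [he', hwe, hpgg]
                  rw [LinearIsometryEquiv.map_smul, smul_smul]
                  push_cast
                  ring_nf
                have h0 := hqgen (p s) (U (g s) w) hz' hval'
                rw [LinearIsometryEquiv.norm_map] at h0
                have hps1 : p s < 1 := by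
                  nlinarith [hp1 s, hppos s, hgt, mul_pos (hppos s) (sub_pos.mpr hgt)]
                nlinarith [h0, hppos s, hps1, sq_nonneg ‖w‖, mul_pos (hppos s) (sub_pos.mpr hps1)]
            have : ‖w‖ = 0 := by nlinarith [sq_nonneg ‖w‖, norm_nonneg w]
            exact norm_eq_zero.mp this
           -- choice of δ
           obtain ⟨δ, hδpos, hδε⟩ : ∃ δ : ℝ, 0 < δ ∧
               2 * (p (g s)) ^ 2 * δ + p (g s) * δ < ε := by
             refine ⟨ε / (2 * (p (g s)) ^ 2 + p (g s) + 1), by positivity, ?_⟩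
             have hd : 0 < 2 * (p (g s)) ^ 2 + p (g s) + 1 := by positivity
             have h9 : (2 * (p (g s)) ^ 2 + p (g s)) * (ε / (2 * (p (g s)) ^ 2 + p (g s) + 1))
                 < ε := by
               rw [← mul_div_assoc, div_lt_iff₀ hd]
               nlinarith [sq_nonneg (p (g s)), hcpos, hε]
             nlinarith [h9]
           obtain ⟨h, hQh⟩ := hANinf y hy δ hδpos
           have hQ0nn : 0 ≤ ‖AN ⟨y, hy⟩ - A h‖ ^ 2
               + (inner ℂ (AN ⟨y, hy⟩ - A h) (y - (h : H)) : ℂ).re := by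
             have hq := hPOS ⟨y, hf⟩ h
             rw [hfe] at hq
             exact hq
           have hkeyid : ∀ m : A.domain, (inner ℂ (A m) (y - (h : H)) : ℂ)
               = (starRingEnd ℂ) (inner ℂ (AN ⟨y, hy⟩ - A h) (m : H)) := by
             intro m
             rw [inner_sub_right, inner_sub_left, map_sub]
             have h1 : (inner ℂ (A m) y : ℂ) = (starRingEnd ℂ) (inner ℂ (AN ⟨y, hy⟩) (m : H)) := by
               rw [← inner_conj_symm]
               congr 1
               rw [← hfe]
               exact (hFA ⟨y, hf⟩ m).symm
             have h2 : (inner ℂ (A m) ((h : H)) : ℂ) = (starRingEnd ℂ) (inner ℂ (A h) (m : H)) := by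
               rw [hsym m h, ← inner_conj_symm]
             rw [h1, h2]
           -- the discriminant bound for every m : real part
           have hdisc : ∀ m : A.domain,
               ((inner ℂ (AN ⟨y, hy⟩ - A h) ((A m) + (m : H)) : ℂ).re) ^ 2
                 ≤ ‖(A m) + (m : H)‖ ^ 2 * δ := by
             intro m
             have hquad : ∀ τ : ℝ, 0 ≤
                 (‖-(A m)‖ ^ 2 + (inner ℂ (-(A m)) (-(m : H)) : ℂ).re) * (τ * τ)
                 + (2 * (inner ℂ (AN ⟨y, hy⟩ - A h) (-(A m)) : ℂ).re
                     + (inner ℂ (AN ⟨y, hy⟩ - A h) (-(m : H)) : ℂ).re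
                     + (inner ℂ (-(A m)) (y - (h : H)) : ℂ).re) * τ
                 + (‖AN ⟨y, hy⟩ - A h‖ ^ 2
                     + (inner ℂ (AN ⟨y, hy⟩ - A h) (y - (h : H)) : ℂ).re) := by
               intro τ
               have hq := hPOS ⟨y, hf⟩ (h + (τ : ℂ) • m)
               rw [hfe] at hq
               have hAadd : A (h + (τ : ℂ) • m) = A h + (τ : ℂ) • A m := by
                 rw [A.map_add, A.map_smul]
               have hcoe : ((h + (τ : ℂ) • m : A.domain) : H) = (h : H) + (τ : ℂ) • (m : H) := rfl
               rw [hAadd, hcoe] at hq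
               have harr1 : AN ⟨y, hy⟩ - (A h + (τ : ℂ) • A m)
                   = (AN ⟨y, hy⟩ - A h) + (τ : ℂ) • (-(A m)) := by module
               have harr2 : y - ((h : H) + (τ : ℂ) • (m : H))
                   = (y - (h : H)) + (τ : ℂ) • (-(m : H)) := by module
               rw [harr1, harr2, hexpand] at hq
               exact hq
             have hd := discrim_le_zero hquad
             rw [discrim] at hd
             have eqa : ‖-(A m)‖ ^ 2 + (inner ℂ (-(A m)) (-(m : H)) : ℂ).re
                 = ‖A m‖ ^ 2 + (inner ℂ (A m) (m : H) : ℂ).re := by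
               rw [norm_neg, inner_neg_neg]
             have eqb : 2 * (inner ℂ (AN ⟨y, hy⟩ - A h) (-(A m)) : ℂ).re
                     + (inner ℂ (AN ⟨y, hy⟩ - A h) (-(m : H)) : ℂ).re
                     + (inner ℂ (-(A m)) (y - (h : H)) : ℂ).re
                 = -(2 * (inner ℂ (AN ⟨y, hy⟩ - A h) ((A m) + (m : H)) : ℂ).re) := by
               rw [inner_neg_right, inner_neg_right, inner_neg_left, hkeyid m, inner_add_right]
               simp only [Complex.neg_re, Complex.add_re, Complex.conj_re]
               ring
             rw [eqa, eqb] at hd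
             have hAmm : (inner ℂ (A m) (m : H) : ℂ).re = (inner ℂ (m : H) (A m) : ℂ).re := by
               rw [← inner_conj_symm, Complex.conj_re]
             have ha_nn : 0 ≤ ‖A m‖ ^ 2 + (inner ℂ (A m) (m : H) : ℂ).re := by
               nlinarith [hnonneg m, hAmm, sq_nonneg ‖A m‖]
             have ha_le : ‖A m‖ ^ 2 + (inner ℂ (A m) (m : H) : ℂ).re ≤ ‖(A m) + (m : H)‖ ^ 2 := by
               rw [norm_add_sq (𝕜 := ℂ)]
               simp only [RCLike.re_to_complex]
               nlinarith [hnonneg m, hAmm, sq_nonneg ‖(m : H)‖]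
             have hq0lt : ‖AN ⟨y, hy⟩ - A h‖ ^ 2
                 + (inner ℂ (AN ⟨y, hy⟩ - A h) (y - (h : H)) : ℂ).re < δ := hQh
             nlinarith [hd, ha_nn, ha_le, hQ0nn, hq0lt, hδpos,
               mul_le_mul_of_nonneg_left hq0lt.le ha_nn,
               mul_le_mul_of_nonneg_right ha_le hδpos.le]
           -- imaginary part
           have hdisc2 : ∀ m : A.domain,
               ((inner ℂ (AN ⟨y, hy⟩ - A h) ((A m) + (m : H)) : ℂ).im) ^ 2
                 ≤ ‖(A m) + (m : H)‖ ^ 2 * δ := by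
             intro m
             have h1 := hdisc (Complex.I • m)
             have hAsm : A (Complex.I • m) = Complex.I • A m := A.map_smul _ _
             have hcoe : ((Complex.I • m : A.domain) : H) = Complex.I • (m : H) := rfl
             rw [hAsm, hcoe, ← smul_add, inner_smul_right, norm_smul, Complex.norm_I, one_mul,
               Complex.I_mul_re] at h1
             nlinarith [h1]
           have hnormSq : ∀ m : A.domain,
               Complex.normSq (inner ℂ (AN ⟨y, hy⟩ - A h) ((A m) + (m : H)) : ℂ)
                 ≤ 2 * δ * ‖(A m) + (m : H)‖ ^ 2 := by
             intro m
             rw [Complex.normSq_apply]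
             nlinarith [hdisc m, hdisc2 m]
           -- extend to the whole space by density
           have hallv : ∀ v : H,
               Complex.normSq (inner ℂ (AN ⟨y, hy⟩ - A h) v : ℂ) ≤ 2 * δ * ‖v‖ ^ 2 := by
             have hsub : ∀ v : H,
                 v ∈ (LinearMap.range (A.toFun + A.domain.subtype) : Submodule ℂ H) →
                 Complex.normSq (inner ℂ (AN ⟨y, hy⟩ - A h) v : ℂ) ≤ 2 * δ * ‖v‖ ^ 2 := by
               rintro v ⟨m, rfl⟩
               have h5 : (A.toFun + A.domain.subtype) m = (A m) + (m : H) := rfl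
               rw [h5]
               exact hnormSq m
             have hJdense :
                 Dense ((LinearMap.range (A.toFun + A.domain.subtype) : Submodule ℂ H) : Set H) := by
               rw [Submodule.dense_iff_topologicalClosure_eq_top,
                 Submodule.topologicalClosure_eq_top_iff, Submodule.eq_bot_iff]
               intro w hworth
               apply hdense1 w
               intro m
               have h2 := (Submodule.mem_orthogonal _ w).mp hworth ((A m) + (m : H)) ⟨m, rfl⟩
               rw [← inner_conj_symm, h2, map_zero]
             intro v
             have hcl :
                 closure ((LinearMap.range (A.toFun + A.domain.subtype) : Submodule ℂ H) : Set H)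
                 ⊆ {v : H | Complex.normSq (inner ℂ (AN ⟨y, hy⟩ - A h) v : ℂ) ≤ 2 * δ * ‖v‖ ^ 2} := by
               apply closure_minimal
               · intro v hv
                 exact hsub v hv
               · apply isClosed_le
                 · exact Complex.continuous_normSq.comp (continuous_const.inner continuous_id)
                 · exact continuous_const.mul (continuous_norm.pow 2)
             exact hcl (by rw [hJdense.closure_eq]; trivial)
           -- hence the norm of the defect is small
           have hE : ‖AN ⟨y, hy⟩ - A h‖ ^ 2 ≤ 2 * δ := by
             have h1 := hallv (AN ⟨y, hy⟩ - A h)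
             have h2 : ((inner ℂ (AN ⟨y, hy⟩ - A h) (AN ⟨y, hy⟩ - A h) : ℂ)).re
                 = ‖AN ⟨y, hy⟩ - A h‖ ^ 2 := by
               have h4 := @inner_self_eq_norm_sq ℂ _ _ _ _ (AN ⟨y, hy⟩ - A h)
               rwa [RCLike.re_to_complex] at h4
             have h3 : ((inner ℂ (AN ⟨y, hy⟩ - A h) (AN ⟨y, hy⟩ - A h) : ℂ)).im = 0 := by
               have h4 := @inner_self_im ℂ _ _ _ _ (AN ⟨y, hy⟩ - A h)
               rwa [RCLike.im_to_complex] at h4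
             rw [Complex.normSq_apply, h2, h3] at h1
             by_cases hz0 : ‖AN ⟨y, hy⟩ - A h‖ = 0
             · rw [hz0]
               nlinarith [hδpos]
             · have h6 : 0 < ‖AN ⟨y, hy⟩ - A h‖ ^ 2 :=
                 pow_pos ((norm_nonneg _).lt_of_ne (Ne.symm hz0)) 2
               nlinarith [h1, h6]
           -- conclude
           refine ⟨⟨U s (h : H), hdom s h⟩, ?_⟩
           have hcoe2 : ((⟨U s (h : H), hdom s h⟩ : A.domain) : H) = U s (h : H) := rfl
           rw [hcoe2, htrans h]
           have hrlt : (inner ℂ (AN ⟨y, hy⟩ - A h) (y - (h : H)) : ℂ).re < δ := by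
             nlinarith [hQh, sq_nonneg ‖AN ⟨y, hy⟩ - A h‖]
           have hb1 : (p (g s)) ^ 2 * ‖AN ⟨y, hy⟩ - A h‖ ^ 2 ≤ (p (g s)) ^ 2 * (2 * δ) :=
             mul_le_mul_of_nonneg_left hE (sq_nonneg _)
           have hb2 : p (g s) * (inner ℂ (AN ⟨y, hy⟩ - A h) (y - (h : H)) : ℂ).re < p (g s) * δ :=
             (mul_lt_mul_iff_right₀ hcpos).mpr hrlt
           nlinarith [hb1, hb2, hδε]
        obtain ⟨hm, -⟩ := (hAN (U s y) ((p (g s) : ℂ) • U s (AN ⟨y, hy⟩))).mpr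
          ⟨⟨hf'', by rw [hADJ, hfe]⟩, hmain⟩
        exact hm
      · -- NEGATIVE case : the whole adjoint domain is contained in AN.domain
        push_neg at hPOS
        obtain ⟨z₀, m₀, hneg⟩ := hPOS
        have hz₀AN : (z₀ : H) ∈ AN.domain := by
          obtain ⟨hm, -⟩ := (hAN (z₀ : H) (A.adjoint z₀)).mpr
            ⟨⟨z₀.2, rfl⟩, fun ε hε => ⟨m₀, lt_trans hneg hε⟩⟩
          exact hm
        have hall : ∀ (z : H), z ∈ A.adjoint.domain → z ∈ AN.domain := by
          intro z hz
          set E : H := A.adjoint z₀ - A m₀ with hE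
          set Fz : H := A.adjoint ⟨z, hz⟩ with hFz
          set u : H := (z₀ : H) - (m₀ : H) with hu
          set Q₀ : ℝ := ‖E‖ ^ 2 + (inner ℂ E u : ℂ).re with hQ₀
          have hQ₀neg : Q₀ < 0 := hneg
          set L : ℝ := 2 * (inner ℂ E Fz : ℂ).re + (inner ℂ E z : ℂ).re + (inner ℂ Fz u : ℂ).re with hL
          set C : ℝ := ‖Fz‖ ^ 2 + (inner ℂ Fz z : ℂ).re with hC
          set τ : ℝ := min 1 ((-Q₀) / (2 * (|L| + |C| + 1))) with hτ
          have hτpos : 0 < τ := by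
            apply lt_min one_pos
            apply div_pos (by linarith) (by positivity)
          have hτ1 : τ ≤ 1 := min_le_left _ _
          have hτ2 : τ ≤ (-Q₀) / (2 * (|L| + |C| + 1)) := min_le_right _ _
          -- the perturbed element
          have hw : (z₀ : H) + (τ : ℂ) • z ∈ A.adjoint.domain :=
            A.adjoint.domain.add_mem z₀.2 (A.adjoint.domain.smul_mem _ hz)
          have hwsub : (⟨(z₀ : H) + (τ : ℂ) • z, hw⟩ : A.adjoint.domain)
              = z₀ + (τ : ℂ) • ⟨z, hz⟩ := rfl
          have hwval : A.adjoint ⟨(z₀ : H) + (τ : ℂ) • z, hw⟩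
              = A.adjoint z₀ + (τ : ℂ) • Fz := by
            rw [hwsub, A.adjoint.map_add, A.adjoint.map_smul, hFz]
          -- the quantity for the perturbed element is negative
          have harr1 : (A.adjoint z₀ + (τ : ℂ) • Fz) - A m₀ = E + (τ : ℂ) • Fz := by
            rw [hE]; module
          have harr2 : ((z₀ : H) + (τ : ℂ) • z) - (m₀ : H) = u + (τ : ℂ) • z := by
            rw [hu]; module
          have hQτ : ‖(A.adjoint z₀ + (τ : ℂ) • Fz) - A m₀‖ ^ 2
              + (inner ℂ ((A.adjoint z₀ + (τ : ℂ) • Fz) - A m₀)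
                  (((z₀ : H) + (τ : ℂ) • z) - (m₀ : H)) : ℂ).re < 0 := by
            rw [harr1, harr2, hexpand E Fz u z τ]
            have hττ : τ * τ ≤ τ := by nlinarith [hτpos.le, hτ1]
            have hCt : C * (τ * τ) ≤ |C| * (τ * τ) :=
              mul_le_mul_of_nonneg_right (le_abs_self C) (mul_nonneg hτpos.le hτpos.le)
            have hCt2 : |C| * (τ * τ) ≤ |C| * τ :=
              mul_le_mul_of_nonneg_left hττ (abs_nonneg C)
            have hLt : L * τ ≤ |L| * τ := mul_le_mul_of_nonneg_right (le_abs_self L) hτpos.le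
            have h5 : C * (τ * τ) + L * τ + Q₀ ≤ (|C| + |L|) * τ + Q₀ := by linarith
            have h7 : (|C| + |L|) * τ ≤ (|C| + |L|) * ((-Q₀) / (2 * (|L| + |C| + 1))) :=
              mul_le_mul_of_nonneg_left hτ2 (by positivity)
            have h8 : (|C| + |L|) * ((-Q₀) / (2 * (|L| + |C| + 1))) < -Q₀ := by
              rw [← mul_div_assoc, div_lt_iff₀ (by positivity)]
              nlinarith [abs_nonneg C, abs_nonneg L]
            have hLC : (‖Fz‖ ^ 2 + (inner ℂ Fz z : ℂ).re) = C := rfl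
            have hLL : (2 * (inner ℂ E Fz : ℂ).re + (inner ℂ E z : ℂ).re + (inner ℂ Fz u : ℂ).re) = L :=
              rfl
            have hQQ : (‖E‖ ^ 2 + (inner ℂ E u : ℂ).re) = Q₀ := rfl
            rw [hLC, hLL, hQQ]
            linarith
          have hwAN : (z₀ : H) + (τ : ℂ) • z ∈ AN.domain := by
            obtain ⟨hm, -⟩ := (hAN ((z₀ : H) + (τ : ℂ) • z) (A.adjoint z₀ + (τ : ℂ) • Fz)).mpr
              ⟨⟨hw, hwval⟩, fun ε hε => ⟨m₀, lt_trans hQτ hε⟩⟩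
            exact hm
          have hτC : (τ : ℂ) ≠ 0 := by
            exact_mod_cast hτpos.ne'
          have hz2 : ((τ : ℂ))⁻¹ • (((z₀ : H) + (τ : ℂ) • z) - (z₀ : H)) ∈ AN.domain :=
            AN.domain.smul_mem _ (AN.domain.sub_mem hwAN hz₀AN)
          have hz3 : ((τ : ℂ))⁻¹ • (((z₀ : H) + (τ : ℂ) • z) - (z₀ : H)) = z := by
            rw [add_sub_cancel_left, inv_smul_smul₀ hτC]
          rwa [hz3] at hz2
        intro s y hy
        obtain ⟨hf, -⟩ := hANadj y hy
        obtain ⟨hf'', -⟩ := hadjT s y hf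
        exact hall _ hf''
    -- final assembly
    intro t
    refine ⟨fun x => ⟨fun hx => hkey t x hx, fun hx => ?_⟩, hval t⟩
    have h2 := hkey (g t) (U t x) hx
    rwa [hWV t x] at h2
end

section
/- Let A₀ be a nonnegative self-adjoint operator that is p(t)-homogeneous with respect to a family of unitary operators {U_t}, and set G_t = (p(t)A₀ + I)(A₀ + I)⁻¹. Then G_t U_t = U_t G_{g(t)}⁻¹ = (G_{g(t)} U_{g(t)})⁻¹ for all t ∈ 𝔗. -/
open InnerProductSpace

/-- for a nonnegative self-adjoint `p(t)`-homogeneous operator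
`A₀` and `G_t = (p(t)A₀ + I)(A₀ + I)⁻¹`, one has
`G_t U_t = U_t G_{g(t)}⁻¹ = (G_{g(t)} U_{g(t)})⁻¹`.  The operator `G t` is
specified by `G t ((A₀ + 1) x) = (p t • A₀ + 1) x` on the (full) range of
`A₀ + I`. -/
theorem Gt_Ut_inverse_relations
    {H : Type*} [NormedAddCommGroup H] [InnerProductSpace ℂ H] [CompleteSpace H]
    {T : Type*} (U : T → (H ≃ₗᵢ[ℂ] H)) (g : T → T) (p : T → ℝ)
    (hadj : ∀ (t : T) (x y : H), (inner ℂ (U t x) y : ℂ) = inner ℂ x (U (g t) y))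
    (hp : ∀ t, 0 < p t)
    (A₀ : H →ₗ.[ℂ] H) (hdense : Dense (A₀.domain : Set H))
    (hsa : A₀.adjoint = A₀)
    (hnonneg : ∀ x : A₀.domain, 0 ≤ (inner ℂ (x : H) (A₀ x) : ℂ).re)
    (hhom : IsPtHomogeneous U p A₀)
    (G : T → (H →L[ℂ] H))
    (hG : ∀ (t : T) (x : A₀.domain), G t (A₀ x + (x : H)) = (p t : ℂ) • A₀ x + (x : H))
    (hsurj : ∀ y : H, ∃ x : A₀.domain, A₀ x + (x : H) = y) :
    ∀ (t : T) (x : H),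
      G t (U t (G (g t) x)) = U t x ∧
      G t (U t (G (g t) (U (g t) x))) = x ∧
      G (g t) (U (g t) (G t (U t x))) = x := by
  -- `U (g t)` is the inverse of `U t`
  have hUinv : ∀ (t : T) (x : H), U (g t) x = (U t).symm x := by
    intro t x
    apply ext_inner_left ℂ
    intro v
    rw [← hadj t v x]
    calc (inner ℂ ((U t) v) x : ℂ)
        = inner ℂ ((U t) v) ((U t) ((U t).symm x)) := by rw [(U t).apply_symm_apply]
      _ = inner ℂ v ((U t).symm x) := (U t).inner_map_map v _
  have hUtU : ∀ (t : T) (x : H), U (g t) (U t x) = x := fun t x => by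
    rw [hUinv]; exact (U t).symm_apply_apply x
  have hUUt : ∀ (t : T) (x : H), U t (U (g t) x) = x := fun t x => by
    rw [hUinv]; exact (U t).apply_symm_apply x
  -- membership transfer
  have hmem : ∀ (t : T) (y : A₀.domain), (U t (y : H)) ∈ A₀.domain :=
    fun t y => ((hhom t).1 y).mp y.2
  -- homogeneity, phrased for subtype elements
  have hh : ∀ (t : T) (y : A₀.domain),
      U t (A₀ y) = (p t : ℂ) • A₀ ⟨U t (y : H), hmem t y⟩ := by
    intro t y
    have := (hhom t).2 (y : H) y.2 (hmem t y)
    simpa using this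
  -- the key scalar relation: A₀ y = (p t * p (g t)) • A₀ y
  have hc : ∀ (t : T) (y : A₀.domain),
      ((p (g t) : ℂ) * (p t : ℂ)) • A₀ y = A₀ y := by
    intro t y
    have h1 := hh t y
    have h2 := hh (g t) ⟨U t (y : H), hmem t y⟩
    have h3 : (⟨U (g t) (U t (y : H)), hmem (g t) ⟨U t (y : H), hmem t y⟩⟩ : A₀.domain) = y :=
      Subtype.ext (hUtU t (y : H))
    rw [h3] at h2
    have h4 : U (g t) (U t (A₀ y)) = A₀ y := hUtU t _
    rw [h1, map_smul, h2, smul_smul] at h4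
    rw [mul_comm]
    exact h4
  intro t x
  -- main computation
  have key : ∀ (s : T) (z : H),
      G s (U s (G (g s) z)) = U s z := by
    intro s z
    obtain ⟨y, hy⟩ := hsurj z
    have e1 : G (g s) z = (p (g s) : ℂ) • A₀ y + (y : H) := by rw [← hy, hG]
    set w : A₀.domain := ⟨U s (y : H), hmem s y⟩ with hw
    have e2 : U s (G (g s) z) = A₀ w + (w : H) := by
      rw [e1, map_add, map_smul, hh s y, smul_smul, hc s w]
    rw [e2, hG s w]
    rw [← hh s y, ← map_add, hy]
  refine ⟨key t x, ?_, ?_⟩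
  · rw [key t (U (g t) x), hUUt t x]
  · -- third relation: same computation with the roles of `t` and `g t` swapped
    obtain ⟨y, hy⟩ := hsurj (U t x)
    have e1 : G t (U t x) = (p t : ℂ) • A₀ y + (y : H) := by rw [← hy, hG]
    set w : A₀.domain := ⟨U (g t) (y : H), hmem (g t) y⟩ with hw
    have e2 : U (g t) (G t (U t x)) = A₀ w + (w : H) := by
      rw [e1, map_add, map_smul, hh (g t) y, smul_smul, mul_comm, hc t w]
    rw [e2, hG (g t) w]
    rw [← hh (g t) y, ← map_add, hy, hUtU t x]
end

section
/- Let A₀ be a nonnegative self-adjoint p(t)-homogeneous operator, G_t = (p(t)A₀ + I)(A₀ + I)⁻¹, and suppose h ∈ ℌ, h ≠ 0, satisfies G_t U_t h = ξ(t) h for all t ∈ 𝔗, where ξ is real-valued. Then ξ(t)·ξ(g(t)) = 1 for all t ∈ 𝔗. -/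
open InnerProductSpace

/-- if `G_t U_t h = ξ(t) h` with `h ≠ 0` (i.e. the singular
element `ψ = (𝔸₀+I)h` is `ξ(t)`-invariant), then `ξ(t)·ξ(g(t)) = 1`. -/
theorem xi_invariance_conjugation
    {H : Type*} [NormedAddCommGroup H] [InnerProductSpace ℂ H] [CompleteSpace H]
    {T : Type*} (U : T → (H ≃ₗᵢ[ℂ] H)) (g : T → T) (p : T → ℝ)
    (hadj : ∀ (t : T) (x y : H), (inner ℂ (U t x) y : ℂ) = inner ℂ x (U (g t) y))
    (hp : ∀ t, 0 < p t)
    (A₀ : H →ₗ.[ℂ] H) (hdense : Dense (A₀.domain : Set H))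
    (hsa : A₀.adjoint = A₀)
    (hnonneg : ∀ x : A₀.domain, 0 ≤ (inner ℂ (x : H) (A₀ x) : ℂ).re)
    (hhom : IsPtHomogeneous U p A₀)
    (G : T → (H →L[ℂ] H))
    (hG : ∀ (t : T) (x : A₀.domain), G t (A₀ x + (x : H)) = (p t : ℂ) • A₀ x + (x : H))
    (hsurj : ∀ y : H, ∃ x : A₀.domain, A₀ x + (x : H) = y)
    (h : H) (hne : h ≠ 0) (ξ : T → ℝ)
    (hinv : ∀ t : T, G t (U t h) = (ξ t : ℂ) • h) :
    ∀ t : T, ξ t * ξ (g t) = 1 := by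
  -- `U (g t)` is the inverse of `U t`
  have hUU : ∀ (t : T) (x : H), U (g t) (U t x) = x := by
    intro t x
    refine ext_inner_left ℂ fun v => ?_
    rw [← hadj t v (U t x), LinearIsometryEquiv.inner_map_map]
  have hUU' : ∀ (t : T) (x : H), U t (U (g t) x) = x := by
    intro t x
    have h1 := hUU t ((U t).symm x)
    rw [(U t).apply_symm_apply] at h1
    rw [h1, (U t).apply_symm_apply]
  -- the adjoint of `U (g t)` is `U t`
  have hadj' : ∀ (t : T) (a b : H), (inner ℂ (U (g t) a) b : ℂ) = inner ℂ a (U t b) := by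
    intro t a b
    conv_lhs => rw [← hUU t b]
    exact (U (g t)).inner_map_map a (U t b)
  -- symmetry of `A₀`
  have hsymm : ∀ x y : A₀.domain, (inner ℂ (A₀ x) (y : H) : ℂ) = inner ℂ (x : H) (A₀ y) := by
    have hfa := LinearPMap.adjoint_isFormalAdjoint hdense (T := A₀)
    rw [hsa] at hfa
    exact fun x y => hfa x y
  -- key scaling identity: `(p t * p (g t)) • A₀ x = A₀ x`
  have hA : ∀ (t : T) (x : A₀.domain), ((p t : ℂ) * (p (g t) : ℂ)) • A₀ x = A₀ x := by
    intro t x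
    obtain ⟨hdom, heq⟩ := hhom t
    obtain ⟨hdom', heq'⟩ := hhom (g t)
    have hx1 : U t (x : H) ∈ A₀.domain := (hdom _).mp x.2
    have hx2 : U (g t) (U t (x : H)) ∈ A₀.domain := (hdom' _).mp hx1
    have e1 := heq (x : H) x.2 hx1
    have e2 := heq' (U t (x : H)) hx1 hx2
    have hx2' : (⟨U (g t) (U t (x : H)), hx2⟩ : A₀.domain) = x := Subtype.ext (hUU t x)
    rw [hx2'] at e2
    have e3 : U (g t) (U t (A₀ ⟨(x : H), x.2⟩)) =
        U (g t) ((p t : ℂ) • A₀ ⟨U t (x : H), hx1⟩) := by rw [e1]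
    rw [hUU, map_smul, e2, smul_smul] at e3
    rw [← e3]
  -- `G t` is self-adjoint
  have hGsa : ∀ (t : T) (u v : H), (inner ℂ (G t u) v : ℂ) = inner ℂ u (G t v) := by
    intro t u v
    obtain ⟨x, hx⟩ := hsurj u
    obtain ⟨y, hy⟩ := hsurj v
    rw [← hx, ← hy, hG, hG]
    simp only [inner_add_left, inner_add_right, inner_smul_left, inner_smul_right,
      Complex.conj_ofReal]
    rw [hsymm x y]
    ring
  -- the composite `U (g t) ∘ G t ∘ U t ∘ G (g t)` is the identity
  have hC : ∀ (t : T) (v : H), U (g t) (G t (U t (G (g t) v))) = v := by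
    intro t v
    obtain ⟨y, hy⟩ := hsurj v
    obtain ⟨hdom, heq⟩ := hhom t
    obtain ⟨hdom', heq'⟩ := hhom (g t)
    have hy1 : U t (y : H) ∈ A₀.domain := (hdom _).mp y.2
    have hy2 : U (g t) (U t (y : H)) ∈ A₀.domain := (hdom' _).mp hy1
    have hy2' : (⟨U (g t) (U t (y : H)), hy2⟩ : A₀.domain) = y := Subtype.ext (hUU t y)
    have e1 := heq (y : H) y.2 hy1
    have e2 := heq' (U t (y : H)) hy1 hy2
    rw [← hy, hG, map_add, map_smul, e1, smul_smul]
    have key : ((p (g t) : ℂ) * (p t : ℂ)) • A₀ ⟨U t (y : H), hy1⟩ =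
        A₀ ⟨U t (y : H), hy1⟩ := by rw [mul_comm]; exact hA t ⟨U t (y : H), hy1⟩
    rw [key, hG t ⟨U t (y : H), hy1⟩, map_add, map_smul, e2, hy2', smul_smul, hUU]
    rw [show ((p t : ℂ) * (p (g t) : ℂ)) • A₀ y = A₀ y from hA t y]
  intro t
  -- the composite `G (g t) ∘ U (g t) ∘ G t ∘ U t` is the identity (adjoint of the above)
  have hD : G (g t) (U (g t) (G t (U t h))) = h := by
    refine ext_inner_right ℂ fun v => ?_
    rw [hGsa (g t), hadj' t, hGsa t, hadj t, hC t v]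
  rw [hinv t, map_smul, map_smul, hinv (g t), smul_smul] at hD
  have h2 : ((ξ t : ℂ) * (ξ (g t) : ℂ) - 1) • h = 0 := by
    rw [sub_smul, one_smul, hD, sub_self]
  rcases smul_eq_zero.mp h2 with h3 | h3
  · have h4 : (ξ t : ℂ) * (ξ (g t) : ℂ) = 1 := by linear_combination h3
    exact_mod_cast h4
  · exact absurd h3 hne
end

section
/- Under the hypotheses of the previous item (G_t U_t h = ξ(t)h, h ≠ 0): if p(t) = 1 then |ξ(t)| = 1, and if p(t) ≠ 1 then min{1, p(t)} < |ξ(t)| < max{1, p(t)}. -/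
open InnerProductSpace

set_option maxHeartbeats 1600000 in
/-- if `G_t U_t h = ξ(t) h` with `h ≠ 0` and `h ∉ D(A₀)`, then
`|ξ(t)| = 1` when `p(t) = 1`, and `min{1,p(t)} < |ξ(t)| < max{1,p(t)}` when
`p(t) ≠ 1`. -/
theorem xi_invariance_modulus_bounds
    {H : Type*} [NormedAddCommGroup H] [InnerProductSpace ℂ H] [CompleteSpace H]
    {T : Type*} (U : T → (H ≃ₗᵢ[ℂ] H)) (g : T → T) (p : T → ℝ)
    (hadj : ∀ (t : T) (x y : H), (inner ℂ (U t x) y : ℂ) = inner ℂ x (U (g t) y))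
    (hp : ∀ t, 0 < p t)
    (A₀ : H →ₗ.[ℂ] H) (hdense : Dense (A₀.domain : Set H))
    (hsa : A₀.adjoint = A₀)
    (hnonneg : ∀ x : A₀.domain, 0 ≤ (inner ℂ (x : H) (A₀ x) : ℂ).re)
    (hhom : IsPtHomogeneous U p A₀)
    (G : T → (H →L[ℂ] H))
    (hG : ∀ (t : T) (x : A₀.domain), G t (A₀ x + (x : H)) = (p t : ℂ) • A₀ x + (x : H))
    (hsurj : ∀ y : H, ∃ x : A₀.domain, A₀ x + (x : H) = y)
    (h : H) (hne : h ≠ 0) (hnd : h ∉ A₀.domain) (ξ : T → ℝ)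
    (hinv : ∀ t : T, G t (U t h) = (ξ t : ℂ) • h) :
    ∀ t : T,
      (p t = 1 → |ξ t| = 1) ∧
      (p t ≠ 1 → min 1 (p t) < |ξ t| ∧ |ξ t| < max 1 (p t)) := by

  intro t
  obtain ⟨x, hx⟩ := hsurj (U t h)
  have hGx := hG t x
  rw [hx, hinv t] at hGx
  set a : H := A₀ x with ha
  set b : H := (x : H) with hb
  -- key equation
  have key : (ξ t : ℂ) • h = (p t : ℂ) • a + b := hGx
  have hh : (0:ℝ) < ‖h‖ := norm_pos_iff.mpr hne
  have hbne : b ≠ 0 := by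
    intro h0
    apply hne
    have hx0 : x = 0 := Subtype.ext h0
    have h00 : U t h = 0 := by
      rw [← hx, h0, add_zero, ha, hx0]
      exact A₀.map_zero
    have := (U t).injective (by simpa using h00)
    simpa using this
  have hane : a ≠ 0 := by
    intro h0
    apply hnd
    have hmem : U t h ∈ A₀.domain := by
      rw [← hx, h0, zero_add]; exact x.2
    exact ((hhom t).1 h).mpr hmem
  have hna : (0:ℝ) < ‖a‖ := norm_pos_iff.mpr hane
  have hnb : (0:ℝ) < ‖b‖ := norm_pos_iff.mpr hbne
  set r : ℝ := (inner ℂ a b : ℂ).re with hr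
  have hr0 : 0 ≤ r := by
    have h1 := hnonneg x
    have h2 : (inner ℂ a b : ℂ) = starRingEnd ℂ (inner ℂ b a) := (inner_conj_symm a b).symm
    rw [hr, h2, Complex.conj_re]
    exact h1
  have hpt : (0:ℝ) < p t := hp t
  -- norm identities
  have e1 : ‖h‖ ^ 2 = ‖a‖ ^ 2 + 2 * r + ‖b‖ ^ 2 := by
    have : ‖h‖ = ‖a + b‖ := by rw [hx]; exact ((U t).norm_map h).symm
    rw [this, @norm_add_sq ℂ]
    simp only [RCLike.re_to_complex, ← hr]
  have hxin : |ξ t| * ‖h‖ = ‖(p t : ℂ) • a + b‖ := by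
    rw [← key, norm_smul, Complex.norm_real, Real.norm_eq_abs]
  have e2 : (|ξ t| * ‖h‖) ^ 2 = (p t) ^ 2 * ‖a‖ ^ 2 + 2 * (p t) * r + ‖b‖ ^ 2 := by
    rw [hxin, @norm_add_sq ℂ]
    have h1 : ‖(p t : ℂ) • a‖ = p t * ‖a‖ := by
      rw [norm_smul, Complex.norm_real, Real.norm_eq_abs, abs_of_pos hpt]
    have h2 : (inner ℂ ((p t : ℂ) • a) b : ℂ).re = p t * r := by
      rw [inner_smul_left, Complex.conj_ofReal, Complex.re_ofReal_mul, hr]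
    rw [h1]
    simp only [RCLike.re_to_complex]
    rw [h2]; ring
  have habs : 0 ≤ |ξ t| := abs_nonneg _
  constructor
  · intro hp1
    rw [hp1] at e2
    have hsq : (|ξ t| * ‖h‖) ^ 2 = ‖h‖ ^ 2 := by rw [e2, e1]; ring
    have heq : |ξ t| * ‖h‖ = ‖h‖ := by
      nlinarith [mul_nonneg habs hh.le]
    exact mul_right_cancel₀ hh.ne' (by rw [heq, one_mul])
  · intro hp1
    rcases lt_or_gt_of_ne hp1 with hlt | hgt
    · -- p t < 1 : p t < |ξ| < 1
      rw [min_eq_right hlt.le, max_eq_left hlt.le]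
      constructor
      · have hsq : (p t * ‖h‖) ^ 2 < (|ξ t| * ‖h‖) ^ 2 := by
          rw [e2, mul_pow, e1]
          nlinarith [mul_nonneg (mul_nonneg hpt.le (sub_nonneg.mpr hlt.le)) hr0,
            mul_pos (mul_pos (by linarith : (0:ℝ) < 1 - p t) (by linarith : (0:ℝ) < 1 + p t))
              (mul_pos hnb hnb)]
        have := lt_of_pow_lt_pow_left₀ 2 (mul_nonneg habs hh.le) hsq
        exact lt_of_mul_lt_mul_right this hh.le
      · have hsq : (|ξ t| * ‖h‖) ^ 2 < (1 * ‖h‖) ^ 2 := by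
          rw [e2, mul_pow, e1]
          nlinarith [mul_nonneg (sub_nonneg.mpr hlt.le) hr0,
            mul_pos (mul_pos (by linarith : (0:ℝ) < 1 - p t) (by linarith : (0:ℝ) < 1 + p t))
              (mul_pos hna hna)]
        have := lt_of_pow_lt_pow_left₀ 2 (by nlinarith : (0:ℝ) ≤ 1 * ‖h‖) hsq
        have := lt_of_mul_lt_mul_right this hh.le
        linarith
    · -- 1 < p t
      rw [min_eq_left hgt.le, max_eq_right hgt.le]
      constructor
      · have hsq : (1 * ‖h‖) ^ 2 < (|ξ t| * ‖h‖) ^ 2 := by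
          rw [e2, mul_pow, e1]
          nlinarith [mul_nonneg (sub_nonneg.mpr hgt.le) hr0,
            mul_pos (mul_pos (by linarith : (0:ℝ) < p t - 1) (by linarith : (0:ℝ) < p t + 1))
              (mul_pos hna hna)]
        have := lt_of_pow_lt_pow_left₀ 2 (mul_nonneg habs hh.le) hsq
        have := lt_of_mul_lt_mul_right this hh.le
        linarith
      · have hsq : (|ξ t| * ‖h‖) ^ 2 < (p t * ‖h‖) ^ 2 := by
          rw [e2, mul_pow, e1]
          nlinarith [mul_nonneg (mul_nonneg hpt.le (sub_nonneg.mpr hgt.le)) hr0,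
            mul_pos (mul_pos (by linarith : (0:ℝ) < p t - 1) (by linarith : (0:ℝ) < p t + 1))
              (mul_pos hnb hnb)]
        have := lt_of_pow_lt_pow_left₀ 2 (mul_nonneg hpt.le hh.le) hsq
        exact lt_of_mul_lt_mul_right this hh.le
end

section
/- Let A₀ be a nonnegative self-adjoint operator on ℌ, ψ₁,…,ψₙ ∈ ℌ_{−2}(A₀) linearly independent with span 𝒳 satisfying 𝒳 ∩ ℌ = {0}, and let A_sym be the restriction of A₀ to {u ∈ D(A₀) : ⟨ψ_j, u⟩ = 0, 1 ≤ j ≤ n}. Then the vectors h_j = (𝔸₀ + I)⁻¹ψ_j, j = 1,…,n, form a basis of the defect subspace ker(A_sym* + I). -/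
open InnerProductSpace

/-- The symmetric restriction `A_sym` of `A₀` to
`{u ∈ D(A₀) : ((A₀ + I)u, h j) = 0, 1 ≤ j ≤ n}`; here `h j = (𝔸₀ + I)⁻¹ ψ j`
represents the singular element `ψ j ∈ ℌ₋₂(A₀)`. -/
noncomputable def symRestrict {H : Type*} [NormedAddCommGroup H]
    [InnerProductSpace ℂ H] [CompleteSpace H] {n : ℕ}
    (A₀ : H →ₗ.[ℂ] H) (h : Fin n → H) : H →ₗ.[ℂ] H :=
  A₀.domRestrict (Submodule.map A₀.domain.subtype
    (⨅ j : Fin n, LinearMap.ker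
      (((innerSL ℂ (h j)) : H →ₗ[ℂ] ℂ) ∘ₗ (A₀.toFun + A₀.domain.subtype))))


section Aux
variable {H : Type*} [NormedAddCommGroup H] [InnerProductSpace ℂ H] [CompleteSpace H]



theorem aux_apply_congr {T S : H →ₗ.[ℂ] H} (hTS : T = S) {x : H}
    (hxT : x ∈ T.domain) (hxS : x ∈ S.domain) : T ⟨x, hxT⟩ = S ⟨x, hxS⟩ := by
  subst hTS; rfl

theorem aux_symm (A₀ : H →ₗ.[ℂ] H) (hdense : Dense (A₀.domain : Set H))
    (hsa : A₀.adjoint = A₀) (x y : A₀.domain) :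
    (inner ℂ (A₀ x) (y : H) : ℂ) = inner ℂ (x : H) (A₀ y) := by
  have hx' : (x : H) ∈ A₀.adjoint.domain := by rw [hsa]; exact x.2
  have key := LinearPMap.adjoint_isFormalAdjoint hdense ⟨(x : H), hx'⟩ y
  rw [aux_apply_congr hsa hx' x.2] at key
  exact key

theorem aux_bound (A₀ : H →ₗ.[ℂ] H)
    (hnonneg : ∀ x : A₀.domain, 0 ≤ (inner ℂ (x : H) (A₀ x) : ℂ).re)
    (x : A₀.domain) : ‖(x : H)‖ ≤ ‖A₀ x + (x : H)‖ := by
  have h1 : ‖(x : H)‖ ^ 2 ≤ (inner ℂ (x : H) (A₀ x + (x : H)) : ℂ).re := by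
    rw [inner_add_right]
    have := hnonneg x
    have h2 : ((inner ℂ (x : H) (x : H) : ℂ)).re = ‖(x : H)‖ ^ 2 := by
      have := @inner_self_eq_norm_sq ℂ H _ _ _ (x : H)
      simpa using this
    simp only [Complex.add_re]
    linarith
  have h3 : (inner ℂ (x : H) (A₀ x + (x : H)) : ℂ).re ≤ ‖(x : H)‖ * ‖A₀ x + (x : H)‖ := by
    calc (inner ℂ (x : H) (A₀ x + (x : H)) : ℂ).re ≤ ‖(inner ℂ (x : H) (A₀ x + (x : H)) : ℂ)‖ :=
          by exact RCLike.re_le_norm (K := ℂ) _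
      _ ≤ ‖(x : H)‖ * ‖A₀ x + (x : H)‖ := norm_inner_le_norm _ _
  rcases eq_or_lt_of_le (norm_nonneg (x : H)) with h0 | h0
  · rw [← h0]; exact norm_nonneg _
  · nlinarith


theorem aux_closed (A₀ : H →ₗ.[ℂ] H) (hdense : Dense (A₀.domain : Set H))
    (hsa : A₀.adjoint = A₀) (f : ℕ → A₀.domain) (u w : H)
    (hu : Filter.Tendsto (fun n => (f n : H)) Filter.atTop (nhds u))
    (hw : Filter.Tendsto (fun n => A₀ (f n)) Filter.atTop (nhds w)) :
    ∃ hu' : u ∈ A₀.domain, A₀ ⟨u, hu'⟩ = w := by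
  have key : ∀ x : A₀.domain, (inner ℂ w (x : H) : ℂ) = inner ℂ u (A₀ x) := by
    intro x
    have h1 : Filter.Tendsto (fun n => (inner ℂ (A₀ (f n)) (x : H) : ℂ))
        Filter.atTop (nhds (inner ℂ w (x : H))) := hw.inner tendsto_const_nhds
    have h2 : (fun n => (inner ℂ (A₀ (f n)) (x : H) : ℂ))
        = fun n => (inner ℂ ((f n : H)) (A₀ x) : ℂ) :=
      funext fun n => aux_symm A₀ hdense hsa (f n) x
    rw [h2] at h1
    have h3 : Filter.Tendsto (fun n => (inner ℂ ((f n : H)) (A₀ x) : ℂ))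
        Filter.atTop (nhds (inner ℂ u (A₀ x))) := hu.inner tendsto_const_nhds
    exact tendsto_nhds_unique h1 h3
  have hu' : u ∈ A₀.adjoint.domain :=
    LinearPMap.mem_adjoint_domain_of_exists u ⟨w, key⟩
  have hval : A₀.adjoint ⟨u, hu'⟩ = w :=
    LinearPMap.adjoint_apply_eq hdense ⟨u, hu'⟩ (fun x => key x)
  refine ⟨hsa ▸ hu', ?_⟩
  rw [← aux_apply_congr hsa hu' (hsa ▸ hu')]
  exact hval

theorem aux_surj (A₀ : H →ₗ.[ℂ] H) (hdense : Dense (A₀.domain : Set H))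
    (hsa : A₀.adjoint = A₀)
    (hnonneg : ∀ x : A₀.domain, 0 ≤ (inner ℂ (x : H) (A₀ x) : ℂ).re)
    (w : H) : ∃ x : A₀.domain, A₀ x + (x : H) = w := by
  set R : Submodule ℂ H := LinearMap.range (A₀.toFun + A₀.domain.subtype) with hR
  have hmem : ∀ v : H, v ∈ R ↔ ∃ x : A₀.domain, A₀ x + (x : H) = v := by
    intro v
    constructor
    · rintro ⟨x, rfl⟩; exact ⟨x, rfl⟩
    · rintro ⟨x, rfl⟩; exact ⟨x, rfl⟩
  have hclosed : IsClosed (R : Set H) := by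
    apply IsSeqClosed.isClosed
    intro g v hg hgv
    choose x hx using fun n => (hmem (g n)).mp (hg n)
    have hcauchyg : CauchySeq g := hgv.cauchySeq
    have hbd : ∀ m k : ℕ, ‖(x m : H) - (x k : H)‖ ≤ ‖g m - g k‖ := by
      intro m k
      have hb := aux_bound A₀ hnonneg (x m - x k)
      have hco : ((x m - x k : A₀.domain) : H) = (x m : H) - (x k : H) := rfl
      rw [hco, A₀.map_sub] at hb
      calc ‖(x m : H) - (x k : H)‖
          ≤ ‖A₀ (x m) - A₀ (x k) + ((x m : H) - (x k : H))‖ := hb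
        _ = ‖g m - g k‖ := by rw [← hx m, ← hx k]; congr 1; abel
    have hcauchyx : CauchySeq (fun n => (x n : H)) := by
      rw [Metric.cauchySeq_iff] at hcauchyg ⊢
      intro ε hε
      obtain ⟨N, hN⟩ := hcauchyg ε hε
      refine ⟨N, fun m hm k hk => ?_⟩
      rw [dist_eq_norm]
      calc ‖(x m : H) - (x k : H)‖ ≤ ‖g m - g k‖ := hbd m k
        _ < ε := by rw [← dist_eq_norm]; exact hN m hm k hk
    obtain ⟨u, hu⟩ := cauchySeq_tendsto_of_complete hcauchyx
    have hA : Filter.Tendsto (fun n => A₀ (x n)) Filter.atTop (nhds (v - u)) := by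
      have heq : (fun n => A₀ (x n)) = fun n => g n - (x n : H) :=
        funext fun n => eq_sub_of_add_eq (hx n)
      rw [heq]
      exact hgv.sub hu
    obtain ⟨hu', hval⟩ := aux_closed A₀ hdense hsa x u (v - u) hu hA
    refine (hmem v).mpr ⟨⟨u, hu'⟩, ?_⟩
    rw [hval]; abel
  have hbot : Rᗮ = ⊥ := by
    rw [Submodule.eq_bot_iff]
    intro v hv
    rw [Submodule.mem_orthogonal] at hv
    have key : ∀ x : A₀.domain, (inner ℂ (-v) (x : H) : ℂ) = inner ℂ v (A₀ x) := by
      intro x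
      have h0 : (inner ℂ (A₀ x + (x : H)) v : ℂ) = 0 := hv _ ((hmem _).mpr ⟨x, rfl⟩)
      have h1 : (inner ℂ v (A₀ x + (x : H)) : ℂ) = 0 := by
        rw [← inner_conj_symm, h0, map_zero]
      rw [inner_add_right] at h1
      rw [inner_neg_left]
      linear_combination -h1
    have hv' : v ∈ A₀.adjoint.domain :=
      LinearPMap.mem_adjoint_domain_of_exists v ⟨-v, key⟩
    have hval : A₀.adjoint ⟨v, hv'⟩ = -v :=
      LinearPMap.adjoint_apply_eq hdense _ key
    have hvd : v ∈ A₀.domain := hsa ▸ hv'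
    have hval2 : A₀ ⟨v, hvd⟩ = -v := by
      rw [← aux_apply_congr hsa hv' hvd]; exact hval
    have hpos := hnonneg ⟨v, hvd⟩
    rw [hval2] at hpos
    have h2 : ((inner ℂ v v : ℂ)).re = ‖v‖ ^ 2 := by
      have := @inner_self_eq_norm_sq ℂ H _ _ _ v
      simpa using this
    rw [inner_neg_right] at hpos
    simp only [Complex.neg_re] at hpos
    have hnv : ‖v‖ = 0 := by nlinarith [norm_nonneg v]
    exact norm_eq_zero.mp hnv
  have htop : R = ⊤ := by
    haveI := hclosed.completeSpace_coe
    exact Submodule.orthogonal_eq_bot_iff.mp hbot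
  exact (hmem w).mp (htop ▸ Submodule.mem_top)


theorem aux_orth {n : ℕ} (h : Fin n → H) (w : H) :
    w ∈ (Submodule.span ℂ (Set.range h))ᗮ ↔ ∀ j, (inner ℂ (h j) w : ℂ) = 0 := by
  rw [Submodule.mem_orthogonal]
  constructor
  · intro hw j; exact hw _ (Submodule.subset_span (Set.mem_range_self j))
  · intro hw u hu
    induction hu using Submodule.span_induction with
    | mem x hx => obtain ⟨j, rfl⟩ := hx; exact hw j
    | zero => simp
    | add x y _ _ hx hy => rw [inner_add_left, hx, hy, add_zero]
    | smul c x _ hx => rw [inner_smul_left, hx, mul_zero]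

end Aux

/-- the vectors `h j = (𝔸₀+I)⁻¹ ψ j` form a basis of the defect
subspace `ker(A_sym* + I)`: they are linearly independent and span it. -/
theorem defect_subspace_basis
    {H : Type*} [NormedAddCommGroup H] [InnerProductSpace ℂ H] [CompleteSpace H]
    {n : ℕ} (A₀ : H →ₗ.[ℂ] H)
    (hdense : Dense (A₀.domain : Set H)) (hsa : A₀.adjoint = A₀)
    (hnonneg : ∀ x : A₀.domain, 0 ≤ (inner ℂ (x : H) (A₀ x) : ℂ).re)
    (h : Fin n → H) (hind : LinearIndependent ℂ h)
    (hHindep : ∀ v ∈ Submodule.span ℂ (Set.range h), v ∈ A₀.domain → v = 0) :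
    LinearIndependent ℂ h ∧
      ((Submodule.span ℂ (Set.range h) : Submodule ℂ H) : Set H)
        = {y : H | ∃ hy : y ∈ (symRestrict A₀ h).adjoint.domain,
            (symRestrict A₀ h).adjoint ⟨y, hy⟩ = -y} := by
  classical
  set T := symRestrict A₀ h with hT
  set K : Submodule ℂ H := Submodule.span ℂ (Set.range h) with hK
  haveI : FiniteDimensional ℂ K := FiniteDimensional.span_of_finite ℂ (Set.finite_range h)
  haveI : CompleteSpace K := FiniteDimensional.complete ℂ K
  have hK2 : Kᗮᗮ = K := Submodule.orthogonal_orthogonal K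
  have hdomeq : T.domain = Submodule.map A₀.domain.subtype
      (⨅ j : Fin n, LinearMap.ker
        (((innerSL ℂ (h j)) : H →ₗ[ℂ] ℂ) ∘ₗ (A₀.toFun + A₀.domain.subtype))) := by
    rw [hT, symRestrict, LinearPMap.domRestrict_domain]
    exact inf_eq_left.mpr (Submodule.map_subtype_le _ _)
  have hmemdom : ∀ (x : A₀.domain), (x : H) ∈ T.domain ↔
      ∀ j, (inner ℂ (h j) (A₀ x + (x : H)) : ℂ) = 0 := by
    intro x
    rw [hdomeq, Submodule.mem_map]
    constructor
    · rintro ⟨y, hy, hyx⟩ j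
      have hxy : y = x := Subtype.ext hyx
      subst hxy
      have := (Submodule.mem_iInf _).mp hy j
      simpa [inner_add_right] using this
    · intro hj
      refine ⟨x, (Submodule.mem_iInf _).mpr fun j => ?_, rfl⟩
      simpa [inner_add_right] using hj j
  have hTsub : ∀ x : T.domain, (x : H) ∈ A₀.domain := by
    intro x
    have hx : (x : H) ∈ Submodule.map A₀.domain.subtype
        (⨅ j : Fin n, LinearMap.ker
          (((innerSL ℂ (h j)) : H →ₗ[ℂ] ℂ) ∘ₗ (A₀.toFun + A₀.domain.subtype))) :=
      hdomeq ▸ x.2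
    obtain ⟨y, -, hyx⟩ := Submodule.mem_map.mp hx
    exact hyx ▸ y.2
  have hTapply : ∀ (x : T.domain), T x = A₀ ⟨(x : H), hTsub x⟩ := by
    intro x
    exact LinearPMap.domRestrict_apply rfl
  have himg : ∀ w : H, w ∈ Kᗮ ↔
      ∃ x : T.domain, A₀ ⟨(x : H), hTsub x⟩ + (x : H) = w := by
    intro w
    constructor
    · intro hw
      obtain ⟨x, hx⟩ := aux_surj A₀ hdense hsa hnonneg w
      have hxT : (x : H) ∈ T.domain := (hmemdom x).mpr (fun j => by
        rw [hx]; exact (aux_orth h w).mp hw j)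
      exact ⟨⟨(x : H), hxT⟩, hx⟩
    · rintro ⟨x, rfl⟩
      rw [hK, aux_orth]
      intro j
      exact (hmemdom ⟨(x : H), hTsub x⟩).mp x.2 j
  have hTdense : Dense (T.domain : Set H) := by
    rw [Submodule.dense_iff_topologicalClosure_eq_top,
      Submodule.topologicalClosure_eq_top_iff, Submodule.eq_bot_iff]
    intro v hv
    rw [Submodule.mem_orthogonal] at hv
    obtain ⟨x₀, hx₀⟩ := aux_surj A₀ hdense hsa hnonneg v
    have hx₀K : (x₀ : H) ∈ Kᗮᗮ := by
      rw [Submodule.mem_orthogonal]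
      intro w hw
      obtain ⟨x, hx⟩ := (himg w).mp hw
      calc (inner ℂ w (x₀ : H) : ℂ)
          = inner ℂ (A₀ ⟨(x : H), hTsub x⟩ + (x : H)) (x₀ : H) := by rw [hx]
        _ = inner ℂ (A₀ ⟨(x : H), hTsub x⟩) ((x₀ : H)) + inner ℂ ((x : H)) ((x₀ : H)) :=
            inner_add_left _ _ _
        _ = inner ℂ ((x : H)) (A₀ x₀) + inner ℂ ((x : H)) ((x₀ : H)) := by
            rw [aux_symm A₀ hdense hsa ⟨(x : H), hTsub x⟩ x₀]
        _ = inner ℂ ((x : H)) (A₀ x₀ + (x₀ : H)) := (inner_add_right _ _ _).symm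
        _ = inner ℂ ((x : H)) v := by rw [hx₀]
        _ = 0 := hv _ x.2
    rw [hK2] at hx₀K
    have hz : (x₀ : H) = 0 := hHindep _ hx₀K x₀.2
    have hx00 : x₀ = 0 := Subtype.ext (by simpa using hz)
    rw [← hx₀, hx00]
    simp
  refine ⟨hind, Set.Subset.antisymm ?_ ?_⟩
  · intro y hy
    have key : ∀ x : T.domain, (inner ℂ (-y) ((x : H)) : ℂ) = inner ℂ y (T x) := by
      intro x
      rw [hTapply x]
      have hw : (A₀ ⟨(x : H), hTsub x⟩ + (x : H)) ∈ Kᗮ := (himg _).mpr ⟨x, rfl⟩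
      have h0 : (inner ℂ y (A₀ ⟨(x : H), hTsub x⟩ + (x : H)) : ℂ) = 0 :=
        (Submodule.mem_orthogonal _ _).mp hw y hy
      rw [inner_add_right] at h0
      rw [inner_neg_left]
      linear_combination -h0
    have hy' : y ∈ T.adjoint.domain := LinearPMap.mem_adjoint_domain_of_exists y ⟨-y, key⟩
    exact ⟨hy', LinearPMap.adjoint_apply_eq hTdense _ key⟩
  · rintro y ⟨hy, hval⟩
    show y ∈ (K : Set H)
    rw [SetLike.mem_coe, ← hK2, Submodule.mem_orthogonal]
    intro w hw
    obtain ⟨x, hx⟩ := (himg w).mp hw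
    have hform := LinearPMap.adjoint_isFormalAdjoint hTdense ⟨y, hy⟩ x
    rw [hval, hTapply x] at hform
    have h0 : (inner ℂ y w : ℂ) = 0 := by
      rw [← hx, inner_add_right]
      rw [inner_neg_left] at hform
      linear_combination -hform
    rw [← inner_conj_symm, h0, map_zero]
end

section
/- With A_sym as above (a densely defined symmetric restriction of a nonnegative self-adjoint A₀ with defect numbers (n,n)), define maps Γ̂₀, Γ̂₁ : D(A_sym*) → ℂⁿ by writing f = u + Σ αⱼhⱼ with u ∈ D(A₀), hⱼ = (𝔸₀+I)⁻¹ψⱼ, and setting Γ̂₀f = (α₁,…,αₙ), Γ̂₁f = (⟨ψ₁,u⟩,…,⟨ψₙ,u⟩). Then (ℂⁿ, Γ̂₀, Γ̂₁) is a boundary triplet for A_sym*: the Green identity (A_sym*f, g) − (f, A_sym*g) = (Γ̂₁f, Γ̂₀g) − (Γ̂₀f, Γ̂₁g) holds for all f, g ∈ D(A_sym*), and (Γ̂₀, Γ̂₁) : D(A_sym*) → ℂⁿ ⊕ ℂⁿ is surjective. -/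
open InnerProductSpace

local notation "⟪" x ", " y "⟫" => @inner ℂ _ _ x y

theorem pmap_eq_apply {H : Type*} [NormedAddCommGroup H] [InnerProductSpace ℂ H]
    {f g : H →ₗ.[ℂ] H} (hfg : f = g) {x : H} (hx : x ∈ f.domain) (hx' : x ∈ g.domain) :
    f ⟨x, hx⟩ = g ⟨x, hx'⟩ := by subst hfg; rfl

/-- the maps `Γ̂₀ f = (α₁,…,αₙ)`, `Γ̂₁ f = (⟨ψ₁,u⟩,…,⟨ψₙ,u⟩)`
coming from the decomposition `f = u + ∑ αⱼ hⱼ`, `u ∈ D(A₀)`, form a boundary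
triplet for `A_sym*`: the Green identity holds and `(Γ̂₀, Γ̂₁)` is surjective
onto `ℂⁿ ⊕ ℂⁿ`. -/
theorem hat_boundary_triplet
    {H : Type*} [NormedAddCommGroup H] [InnerProductSpace ℂ H] [CompleteSpace H]
    {n : ℕ} (A₀ : H →ₗ.[ℂ] H)
    (hdense : Dense (A₀.domain : Set H)) (hsa : A₀.adjoint = A₀)
    (hnonneg : ∀ x : A₀.domain, 0 ≤ (inner ℂ (x : H) (A₀ x) : ℂ).re)
    (h : Fin n → H) (hind : LinearIndependent ℂ h)
    (hHindep : ∀ v ∈ Submodule.span ℂ (Set.range h), v ∈ A₀.domain → v = 0)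
    (Γ₀ Γ₁ : ((symRestrict A₀ h).adjoint.domain) →ₗ[ℂ] (Fin n → ℂ))
    -- `Γ̂₀ f` gives the coefficients `αⱼ` of the decomposition `f = u + ∑ αⱼ hⱼ`:
    (hdecomp : ∀ f : (symRestrict A₀ h).adjoint.domain,
      ((f : H) - ∑ j : Fin n, Γ₀ f j • h j) ∈ A₀.domain)
    -- `Γ̂₁ f j = ⟨ψⱼ, u⟩ = ((A₀ + I)u, hⱼ)`:
    (hΓ₁ : ∀ f : (symRestrict A₀ h).adjoint.domain, ∀ j : Fin n,
      Γ₁ f j = inner ℂ (h j)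
        ((A₀ ⟨(f : H) - ∑ j' : Fin n, Γ₀ f j' • h j', hdecomp f⟩ : H)
          + ((f : H) - ∑ j' : Fin n, Γ₀ f j' • h j'))) :
    (∀ f g : (symRestrict A₀ h).adjoint.domain,
      (inner ℂ ((symRestrict A₀ h).adjoint f) (g : H) : ℂ)
          - inner ℂ (f : H) ((symRestrict A₀ h).adjoint g)
        = ∑ j : Fin n, (starRingEnd ℂ) (Γ₁ f j) * Γ₀ g j
          - ∑ j : Fin n, (starRingEnd ℂ) (Γ₀ f j) * Γ₁ g j) ∧
    (∀ a b : Fin n → ℂ, ∃ f : (symRestrict A₀ h).adjoint.domain,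
      Γ₀ f = a ∧ Γ₁ f = b) := by
  -- basic symmetry of A₀
  have hsym : ∀ x y : A₀.domain, ⟪(A₀ x : H), (y : H)⟫ = ⟪(x : H), (A₀ y : H)⟫ := by
    have hfa := LinearPMap.adjoint_isFormalAdjoint hdense (T := A₀)
    rw [hsa] at hfa
    exact fun x y => hfa x y
  -- membership and value transport along `hsa`
  have hAmem : ∀ {w : H}, w ∈ A₀.adjoint.domain → w ∈ A₀.domain := by
    intro w hw; rwa [hsa] at hw
  -- domain of T : membership facts
  have hdomsub : ∀ x : (symRestrict A₀ h).domain, (x : H) ∈ A₀.domain := by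
    intro x
    exact (Submodule.mem_inf.mp x.2).2
  have hTval : ∀ (x : (symRestrict A₀ h).domain) (hx : (x : H) ∈ A₀.domain), (symRestrict A₀ h) x = A₀ ⟨x, hx⟩ := by
    intro x hx
    exact LinearPMap.domRestrict_apply rfl
  have hker : ∀ (x : (symRestrict A₀ h).domain) (hx : (x : H) ∈ A₀.domain) (j : Fin n),
      ⟪h j, (A₀ ⟨(x : H), hx⟩ : H) + (x : H)⟫ = 0 := by
    intro x hx j
    obtain ⟨y, hyK, hyx⟩ := Submodule.mem_map.mp (Submodule.mem_inf.mp x.2).1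
    have h0 : (((innerSL ℂ (h j)) : H →ₗ[ℂ] ℂ) ∘ₗ (A₀.toFun + A₀.domain.subtype)) y = 0 :=
      LinearMap.mem_ker.mp ((Submodule.mem_iInf _).mp hyK j)
    have hyx' : (⟨(x : H), hx⟩ : A₀.domain) = y := Subtype.ext hyx.symm
    rw [hyx', ← hyx]
    simpa [inner_add_right] using h0
  have hmemT : ∀ (x : A₀.domain), (∀ j, ⟪h j, (A₀ x : H) + (x : H)⟫ = 0) →
      (x : H) ∈ (symRestrict A₀ h).domain := by
    intro x hxk
    refine Submodule.mem_inf.mpr ⟨?_, x.2⟩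
    refine Submodule.mem_map.mpr ⟨x, ?_, rfl⟩
    refine (Submodule.mem_iInf _).mpr fun j => LinearMap.mem_ker.mpr ?_
    simpa [inner_add_right] using hxk j
  -- surjectivity of A₀ + I
  have hsurj : ∀ y : H, ∃ u : A₀.domain, (A₀ u : H) + u = y := by
    set L : A₀.domain →ₗ[ℂ] H := A₀.toFun + A₀.domain.subtype with hLdef
    have hLval : ∀ u : A₀.domain, L u = (A₀ u : H) + u := fun u => rfl
    set N := LinearMap.range L with hNdef
    have hlow : ∀ u : A₀.domain, ‖(u : H)‖ ≤ ‖L u‖ := by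
      intro u
      rcases eq_or_ne (u : H) 0 with h0 | h0
      · simp [h0]
      · have hpos : 0 < ‖(u : H)‖ := norm_pos_iff.mpr h0
        have h1 : ‖(u : H)‖ ^ 2 ≤ ‖(u : H)‖ * ‖L u‖ := by
          have e1 : (‖(u : H)‖ : ℝ) ^ 2 = RCLike.re ⟪(u : H), (u : H)⟫ :=
            (inner_self_eq_norm_sq _).symm
          have e2 : RCLike.re ⟪(u : H), (u : H)⟫ ≤ RCLike.re ⟪(u : H), L u⟫ := by
            rw [hLval, inner_add_right, map_add]
            have := hnonneg u
            simp only [RCLike.re_to_complex] at *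
            linarith
          have e3 : RCLike.re ⟪(u : H), L u⟫ ≤ ‖(⟪(u : H), L u⟫ : ℂ)‖ := RCLike.re_le_norm _
          have e4 : ‖(⟪(u : H), L u⟫ : ℂ)‖ ≤ ‖(u : H)‖ * ‖L u‖ := norm_inner_le_norm _ _
          linarith [e1.le.trans (e2.trans (e3.trans e4))]
        nlinarith [h1, hpos]
    have horth : Nᗮ = ⊥ := by
      rw [Submodule.eq_bot_iff]
      intro w hw
      have hw' : ∀ u : A₀.domain, ⟪L u, w⟫ = 0 := fun u =>
        (Submodule.mem_orthogonal _ w).mp hw _ ⟨u, rfl⟩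
      have hx0 : ∀ x : A₀.domain, ⟪-w, (x : H)⟫ = ⟪w, (A₀ x : H)⟫ := by
        intro x
        have h2 : ⟪w, (A₀ x : H) + x⟫ = 0 := by
          rw [inner_eq_zero_symm]; exact hw' x
        rw [inner_add_right] at h2
        rw [inner_neg_left]
        linear_combination -h2
      have hmem : w ∈ A₀.adjoint.domain :=
        LinearPMap.mem_adjoint_domain_of_exists w ⟨-w, fun x => hx0 x⟩
      have hval : A₀.adjoint ⟨w, hmem⟩ = -w :=
        LinearPMap.adjoint_apply_eq hdense _ (fun x => hx0 x)
      have hmem' : w ∈ A₀.domain := hAmem hmem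
      have hval' : A₀ ⟨w, hmem'⟩ = -w := (pmap_eq_apply hsa hmem hmem').symm.trans hval
      have hn := hnonneg ⟨w, hmem'⟩
      rw [hval'] at hn
      have h3 : (⟪w, -w⟫ : ℂ).re = -‖w‖ ^ 2 := by
        rw [inner_neg_right]
        have := inner_self_eq_norm_sq (𝕜 := ℂ) w
        simp only [RCLike.re_to_complex] at this
        simp [this]
        rw [← Complex.ofReal_pow, Complex.ofReal_re]
      rw [h3] at hn
      have : ‖w‖ = 0 := by nlinarith [norm_nonneg w]
      exact norm_eq_zero.mp this
    have hclosed : IsClosed (N : Set H) := by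
      refine IsSeqClosed.isClosed ?_
      intro ys y hys hlim
      choose u hu using fun k => hys k
      have hcau : CauchySeq fun k => (u k : H) := by
        have hycau := hlim.cauchySeq
        rw [Metric.cauchySeq_iff] at hycau ⊢
        intro ε hε
        obtain ⟨M, hM⟩ := hycau ε hε
        refine ⟨M, fun m hm k hk => ?_⟩
        have hd : dist ((u m : H)) ((u k : H)) ≤ dist (ys m) (ys k) := by
          rw [dist_eq_norm, dist_eq_norm, ← hu m, ← hu k]
          calc ‖(u m : H) - (u k : H)‖ = ‖((u m - u k : A₀.domain) : H)‖ := by push_cast; ring_nf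
            _ ≤ ‖L (u m - u k)‖ := hlow _
            _ = ‖L (u m) - L (u k)‖ := by rw [map_sub]
        exact lt_of_le_of_lt hd (hM m hm k hk)
      obtain ⟨uoo, huoo⟩ := cauchySeq_tendsto_of_complete hcau
      have hA : Filter.Tendsto (fun k => (A₀ (u k) : H)) Filter.atTop (nhds (y - uoo)) := by
        have he : (fun k => (A₀ (u k) : H)) = fun k => ys k - u k := by
          funext k
          rw [← hu k, hLval]
          abel
        rw [he]
        exact hlim.sub huoo
      have hx0 : ∀ x : A₀.domain, ⟪y - uoo, (x : H)⟫ = ⟪uoo, (A₀ x : H)⟫ := by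
        intro x
        have t1 : Filter.Tendsto (fun k => ⟪(A₀ (u k) : H), (x : H)⟫) Filter.atTop
            (nhds ⟪y - uoo, (x : H)⟫) := hA.inner tendsto_const_nhds
        have t2 : Filter.Tendsto (fun k => ⟪(u k : H), (A₀ x : H)⟫) Filter.atTop
            (nhds ⟪uoo, (A₀ x : H)⟫) := huoo.inner tendsto_const_nhds
        have he : (fun k => ⟪(A₀ (u k) : H), (x : H)⟫) = fun k => ⟪(u k : H), (A₀ x : H)⟫ :=
          funext fun k => hsym (u k) x
        rw [he] at t1
        exact tendsto_nhds_unique t1 t2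
      have hmem : uoo ∈ A₀.adjoint.domain :=
        LinearPMap.mem_adjoint_domain_of_exists _ ⟨y - uoo, hx0⟩
      have hval : A₀.adjoint ⟨uoo, hmem⟩ = y - uoo :=
        LinearPMap.adjoint_apply_eq hdense _ hx0
      have hmem' : uoo ∈ A₀.domain := hAmem hmem
      have hval' : (A₀ ⟨uoo, hmem'⟩ : H) = y - uoo := (pmap_eq_apply hsa hmem hmem').symm.trans hval
      exact ⟨⟨uoo, hmem'⟩, by rw [hLval, hval']; abel⟩
    have hNtop : N = ⊤ := by
      have h5 := Submodule.topologicalClosure_eq_top_iff.mpr horth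
      rwa [hclosed.submodule_topologicalClosure_eq] at h5
    intro y
    have : y ∈ N := by rw [hNtop]; exact Submodule.mem_top
    obtain ⟨v, hv⟩ := this
    exact ⟨v, by rw [← hLval]; exact hv⟩
  -- density of dom T
  have hspanfd : FiniteDimensional ℂ (Submodule.span ℂ (Set.range h)) :=
    FiniteDimensional.span_of_finite ℂ (Set.finite_range h)
  have hdenseT : Dense ((symRestrict A₀ h).domain : Set H) := by
    rw [Submodule.dense_iff_topologicalClosure_eq_top,
      Submodule.topologicalClosure_eq_top_iff, Submodule.eq_bot_iff]
    intro w hw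
    obtain ⟨rw_, hrw⟩ := hsurj w
    have hM : (rw_ : H) ∈ Submodule.span ℂ (Set.range h) := by
      rw [← Submodule.orthogonal_orthogonal (Submodule.span ℂ (Set.range h))]
      refine (Submodule.mem_orthogonal _ _).mpr fun m hm => ?_
      obtain ⟨rm, hrm⟩ := hsurj m
      have hrmT : (rm : H) ∈ (symRestrict A₀ h).domain := by
        refine hmemT rm fun j => ?_
        rw [hrm]
        exact Submodule.inner_right_of_mem_orthogonal
          (Submodule.subset_span (Set.mem_range_self j)) hm
      calc ⟪m, (rw_ : H)⟫ = ⟪(A₀ rm : H) + rm, (rw_ : H)⟫ := by rw [hrm]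
        _ = ⟪(rm : H), (A₀ rw_ : H) + rw_⟫ := by
            rw [inner_add_left, inner_add_right, hsym rm rw_]
        _ = ⟪(rm : H), w⟫ := by rw [hrw]
        _ = 0 := Submodule.inner_right_of_mem_orthogonal hrmT hw
    have h0 : (rw_ : H) = 0 := hHindep _ hM rw_.2
    have h1 : rw_ = 0 := Subtype.ext h0
    rw [← hrw, h1]
    simp
  -- elements of the adjoint domain
  have hadju : ∀ u : A₀.domain, (u : H) ∈ (symRestrict A₀ h).adjoint.domain := by
    intro u
    apply LinearPMap.mem_adjoint_domain_of_exists
    refine ⟨A₀ u, fun x => ?_⟩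
    rw [hTval x (hdomsub x)]
    exact hsym u ⟨x, hdomsub x⟩
  have hadjh : ∀ j, h j ∈ (symRestrict A₀ h).adjoint.domain := by
    intro j
    apply LinearPMap.mem_adjoint_domain_of_exists
    refine ⟨-h j, fun x => ?_⟩
    rw [hTval x (hdomsub x)]
    have := hker x (hdomsub x) j
    rw [inner_add_right] at this
    rw [inner_neg_left]
    linear_combination -this
  -- the adjoint value
  have hadjval : ∀ f : (symRestrict A₀ h).adjoint.domain, ((symRestrict A₀ h).adjoint f : H)
      = (A₀ ⟨(f : H) - ∑ j : Fin n, Γ₀ f j • h j, hdecomp f⟩ : H)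
        - ∑ j : Fin n, Γ₀ f j • h j := by
    intro f
    apply LinearPMap.adjoint_apply_eq hdenseT
    intro x
    rw [hTval x (hdomsub x)]
    set x' : A₀.domain := ⟨(x : H), hdomsub x⟩ with hx'def
    set u : A₀.domain := ⟨(f : H) - ∑ j : Fin n, Γ₀ f j • h j, hdecomp f⟩ with hudef
    have hf : (f : H) = (u : H) + ∑ j : Fin n, Γ₀ f j • h j := by
      rw [hudef]; simp
    have hxx : (x : H) = (x' : H) := rfl
    rw [hf, hxx]
    have hj : ∀ j : Fin n, ⟪Γ₀ f j • h j, (A₀ x' : H)⟫ = -⟪Γ₀ f j • h j, (x' : H)⟫ := by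
      intro j
      have hk := hker x (hdomsub x) j
      rw [inner_add_right] at hk
      rw [inner_smul_left, inner_smul_left]
      have hxx' : ⟪h j, (x : H)⟫ = ⟪h j, (x' : H)⟫ := rfl
      rw [hxx', ← hx'def] at hk
      linear_combination (starRingEnd ℂ) (Γ₀ f j) * hk
    rw [inner_sub_left, inner_add_left, hsym u x', sum_inner, sum_inner]
    rw [Finset.sum_congr rfl fun j _ => hj j, Finset.sum_neg_distrib]
    ring
  constructor
  · intro f g
    obtain ⟨uf, huf⟩ : ∃ u : A₀.domain, (u : H) = (f : H) - ∑ j : Fin n, Γ₀ f j • h j :=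
      ⟨⟨_, hdecomp f⟩, rfl⟩
    obtain ⟨ug, hug⟩ : ∃ u : A₀.domain, (u : H) = (g : H) - ∑ j : Fin n, Γ₀ g j • h j :=
      ⟨⟨_, hdecomp g⟩, rfl⟩
    have hmkf : (⟨(f : H) - ∑ j : Fin n, Γ₀ f j • h j, hdecomp f⟩ : A₀.domain) = uf :=
      Subtype.ext huf.symm
    have hmkg : (⟨(g : H) - ∑ j : Fin n, Γ₀ g j • h j, hdecomp g⟩ : A₀.domain) = ug :=
      Subtype.ext hug.symm
    have hfe : (f : H) = (uf : H) + ∑ j : Fin n, Γ₀ f j • h j := by rw [huf]; simp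
    have hge : (g : H) = (ug : H) + ∑ j : Fin n, Γ₀ g j • h j := by rw [hug]; simp
    have hG1f : ∀ j, Γ₁ f j = ⟪h j, (A₀ uf : H) + uf⟫ := by
      intro j; rw [hΓ₁ f j, hmkf, ← huf]
    have hG1g : ∀ j, Γ₁ g j = ⟪h j, (A₀ ug : H) + ug⟫ := by
      intro j; rw [hΓ₁ g j, hmkg, ← hug]
    rw [hadjval f, hadjval g, hmkf, hmkg]
    simp only [hG1f, hG1g]
    rw [hfe, hge]
    have hSb : ⟪(A₀ uf : H) + uf, ∑ j : Fin n, Γ₀ g j • h j⟫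
        = ∑ j : Fin n, (starRingEnd ℂ) ⟪h j, (A₀ uf : H) + uf⟫ * Γ₀ g j := by
      rw [inner_sum]
      refine Finset.sum_congr rfl fun j _ => ?_
      rw [inner_smul_right, ← inner_conj_symm ((A₀ uf : H) + uf) (h j)]
      ring
    have hSa : ⟪∑ j : Fin n, Γ₀ f j • h j, (A₀ ug : H) + ug⟫
        = ∑ j : Fin n, (starRingEnd ℂ) (Γ₀ f j) * ⟪h j, (A₀ ug : H) + ug⟫ := by
      rw [sum_inner]
      refine Finset.sum_congr rfl fun j _ => ?_
      rw [inner_smul_left]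
    rw [← hSb, ← hSa]
    simp only [inner_add_left, inner_add_right, inner_sub_left, inner_sub_right]
    linear_combination hsym uf ug
  · intro a b
    have hφ : ∃ w : H, ∀ j, ⟪h j, w⟫ = b j := by
      set M := Submodule.span ℂ (Set.range h) with hMdef
      set φ : H →ₗ[ℂ] (Fin n → ℂ) :=
        LinearMap.pi (fun j => ((innerSL ℂ (h j)) : H →ₗ[ℂ] ℂ)) with hφdef
      have hφval : ∀ (w : H) (j : Fin n), φ w j = ⟪h j, w⟫ := fun w j => rfl
      have hinj : Function.Injective (φ.domRestrict M) := by
        rw [← LinearMap.ker_eq_bot, Submodule.eq_bot_iff]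
        intro x hx
        have hx0 : ∀ j, ⟪h j, (x : H)⟫ = 0 := by
          intro j
          have := LinearMap.mem_ker.mp hx
          have := congrFun this j
          simpa [hφval] using this
        obtain ⟨c, hc⟩ := (Submodule.mem_span_range_iff_exists_fun ℂ).mp x.2
        have hxx : ⟪(x : H), (x : H)⟫ = 0 := by
          conv_lhs => rw [← hc]
          rw [sum_inner]
          refine Finset.sum_eq_zero fun j _ => ?_
          rw [inner_smul_left, hc, hx0 j, mul_zero]
        exact Subtype.ext (inner_self_eq_zero.mp hxx)
      have hfr : Module.finrank ℂ M = Module.finrank ℂ (Fin n → ℂ) := by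
        rw [hMdef, finrank_span_eq_card hind, Module.finrank_fin_fun, Fintype.card_fin]
      have hsurjφ : Function.Surjective (φ.domRestrict M) :=
        (LinearMap.injective_iff_surjective_of_finrank_eq_finrank hfr).mp hinj
      obtain ⟨w, hwb⟩ := hsurjφ b
      exact ⟨(w : H), fun j => by rw [← hφval]; exact congrFun hwb j⟩
    obtain ⟨w, hwb⟩ := hφ
    obtain ⟨u, huw⟩ := hsurj w
    have hmemf : ((u : H) + ∑ j : Fin n, a j • h j) ∈ (symRestrict A₀ h).adjoint.domain :=
      Submodule.add_mem _ (hadju u)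
        (Submodule.sum_mem _ fun j _ => Submodule.smul_mem _ _ (hadjh j))
    set F : (symRestrict A₀ h).adjoint.domain := ⟨(u : H) + ∑ j : Fin n, a j • h j, hmemf⟩
      with hFdef
    have hΓ₀F : Γ₀ F = a := by
      have h1 := hdecomp F
      have h2 : ((F : H) - ∑ j : Fin n, a j • h j) ∈ A₀.domain := by
        have : (F : H) - ∑ j : Fin n, a j • h j = (u : H) := by rw [hFdef]; simp
        rw [this]; exact u.2
      have h3 : (∑ j : Fin n, (a j - Γ₀ F j) • h j) ∈ A₀.domain := by
        have he : ∑ j : Fin n, (a j - Γ₀ F j) • h j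
            = ((F : H) - ∑ j : Fin n, Γ₀ F j • h j) - ((F : H) - ∑ j : Fin n, a j • h j) := by
          simp only [sub_smul, Finset.sum_sub_distrib]
          abel
        rw [he]
        exact Submodule.sub_mem _ h1 h2
      have h4 : (∑ j : Fin n, (a j - Γ₀ F j) • h j) ∈ Submodule.span ℂ (Set.range h) :=
        Submodule.sum_mem _ fun j _ =>
          Submodule.smul_mem _ _ (Submodule.subset_span (Set.mem_range_self j))
      have h5 : ∑ j : Fin n, (a j - Γ₀ F j) • h j = 0 := hHindep _ h4 h3
      have h6 := Fintype.linearIndependent_iff.mp hind _ h5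
      funext j
      exact (sub_eq_zero.mp (h6 j)).symm
    refine ⟨F, hΓ₀F, ?_⟩
    funext j
    rw [hΓ₁ F j]
    have hcoe : (F : H) - ∑ j' : Fin n, Γ₀ F j' • h j' = (u : H) := by
      rw [hΓ₀F, hFdef]; simp
    have hmk : (⟨(F : H) - ∑ j' : Fin n, Γ₀ F j' • h j', hdecomp F⟩ : A₀.domain) = u :=
      Subtype.ext hcoe
    rw [hmk, hcoe, huw, hwb j]
end

section
/- Let A₀ be a nonnegative self-adjoint operator p(t)-homogeneous with respect to a family of unitary operators {U_t} closed under adjoints, and suppose A is a nonnegative densely defined symmetric operator with A ⊂ A₀ and U_t A = p(t) A U_t. Then (p(t)A₀ + I)(A₀ + I)⁻¹ U_t maps ker(A* + I) onto ker(A* + I) for every t ∈ 𝔗. -/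
open InnerProductSpace

/-- for a nonnegative symmetric `p(t)`-homogeneous operator `A`
with nonnegative self-adjoint `p(t)`-homogeneous extension `A₀`, the operator
`(p(t)A₀ + I)(A₀ + I)⁻¹ U_t` maps `ker(A* + I)` onto `ker(A* + I)`. -/
theorem GtUt_maps_defect_onto_defect
    {H : Type*} [NormedAddCommGroup H] [InnerProductSpace ℂ H] [CompleteSpace H]
    {T : Type*} (U : T → (H ≃ₗᵢ[ℂ] H)) (g : T → T) (p : T → ℝ)
    (hadj : ∀ (t : T) (x y : H), (inner ℂ (U t x) y : ℂ) = inner ℂ x (U (g t) y))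
    (hp : ∀ t, 0 < p t)
    (A : H →ₗ.[ℂ] H) (hAdense : Dense (A.domain : Set H))
    (hAclosed : A.IsClosed)
    (hAsym : ∀ x y : A.domain, (inner ℂ (A x) (y : H) : ℂ) = inner ℂ (x : H) (A y))
    (hAnonneg : ∀ x : A.domain, 0 ≤ (inner ℂ (x : H) (A x) : ℂ).re)
    (hAhom : IsPtHomogeneous U p A)
    (A₀ : H →ₗ.[ℂ] H) (hle : A ≤ A₀)
    (hsa : A₀.adjoint = A₀)
    (hnonneg : ∀ x : A₀.domain, 0 ≤ (inner ℂ (x : H) (A₀ x) : ℂ).re)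
    (hhom : IsPtHomogeneous U p A₀)
    -- `G t = (p(t)A₀ + I)(A₀ + I)⁻¹` :
    (G : T → (H →L[ℂ] H))
    (hG : ∀ (t : T) (x : A₀.domain), G t (A₀ x + (x : H)) = (p t : ℂ) • A₀ x + (x : H))
    (hsurj : ∀ y : H, ∃ x : A₀.domain, A₀ x + (x : H) = y) :
    ∀ t : T,
      (fun y => G t (U t y)) ''
          {y : H | ∃ hy : y ∈ A.adjoint.domain, A.adjoint ⟨y, hy⟩ = -y}
        = {y : H | ∃ hy : y ∈ A.adjoint.domain, A.adjoint ⟨y, hy⟩ = -y} := by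
  have hdense₀ : Dense (A₀.domain : Set H) := hAdense.mono hle.1
  have hFA : A₀.IsFormalAdjoint A₀ := by
    have h := LinearPMap.adjoint_isFormalAdjoint (T := A₀) hdense₀
    rwa [hsa] at h
  -- characterization of the defect subspace
  have memK : ∀ y : H,
      (∃ hy : y ∈ A.adjoint.domain, A.adjoint ⟨y, hy⟩ = -y) ↔
        ∀ x : A.domain, (inner ℂ y (A x) : ℂ) = -(inner ℂ y (x : H) : ℂ) := by
    intro y
    constructor
    · rintro ⟨hy, heq⟩ x
      have h := (LinearPMap.adjoint_isFormalAdjoint hAdense) ⟨y, hy⟩ x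
      rw [heq] at h
      rw [← h, inner_neg_left]
    · intro h
      have hy : y ∈ A.adjoint.domain := by
        apply LinearPMap.mem_adjoint_domain_of_exists
        exact ⟨-y, fun x => by rw [inner_neg_left, h x]⟩
      exact ⟨hy, LinearPMap.adjoint_apply_eq hAdense ⟨y, hy⟩
        (fun x => by rw [inner_neg_left, h x])⟩
  intro t
  -- Step A : `U t` maps `ker (A* + 1)` into `ker (A* + 1/p t)`
  have stepA : ∀ y : H,
      (∀ x : A.domain, (inner ℂ y (A x) : ℂ) = -(inner ℂ y (x : H) : ℂ)) →
      ∀ x : A.domain,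
        (p t : ℂ) * (inner ℂ (U t y) (A x) : ℂ) = -(inner ℂ (U t y) (x : H) : ℂ) := by
    intro y hy x
    have hw : ((U t).symm (x : H)) ∈ A.domain := by
      have h := (hAhom t).1 ((U t).symm (x : H))
      rw [LinearIsometryEquiv.apply_symm_apply] at h
      exact h.mpr x.2
    have hw' : U t ((U t).symm (x : H)) ∈ A.domain := by
      rw [LinearIsometryEquiv.apply_symm_apply]; exact x.2
    have heq := (hAhom t).2 _ hw hw'
    have hxx : (⟨U t ((U t).symm (x : H)), hw'⟩ : A.domain) = x :=
      Subtype.ext (by simp)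
    rw [hxx] at heq
    calc (p t : ℂ) * (inner ℂ (U t y) (A x) : ℂ)
        = inner ℂ (U t y) ((p t : ℂ) • (A x : H)) := (inner_smul_right _ _ _).symm
      _ = inner ℂ (U t y) (U t (A ⟨(U t).symm (x : H), hw⟩)) := by rw [heq]
      _ = inner ℂ y (A ⟨(U t).symm (x : H), hw⟩ : H) := (U t).inner_map_map _ _
      _ = -(inner ℂ y ((U t).symm (x : H)) : ℂ) := hy _
      _ = -(inner ℂ (U t y) (U t ((U t).symm (x : H))) : ℂ) := by
            rw [(U t).inner_map_map]
      _ = -(inner ℂ (U t y) (x : H) : ℂ) := by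
            rw [LinearIsometryEquiv.apply_symm_apply]
  -- Step B : `(U t).symm` maps `ker (A* + 1/p t)` into `ker (A* + 1)`
  have stepB : ∀ z : H,
      (∀ x : A.domain, (p t : ℂ) * (inner ℂ z (A x) : ℂ) = -(inner ℂ z (x : H) : ℂ)) →
      ∀ x : A.domain,
        (inner ℂ ((U t).symm z) (A x) : ℂ) = -(inner ℂ ((U t).symm z) (x : H) : ℂ) := by
    intro z hz x
    have hx' : U t (x : H) ∈ A.domain := ((hAhom t).1 x).mp x.2
    have heq : U t (A x) = (p t : ℂ) • (A ⟨U t (x : H), hx'⟩ : H) :=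
      (hAhom t).2 (x : H) x.2 hx'
    calc (inner ℂ ((U t).symm z) (A x) : ℂ)
        = inner ℂ (U t ((U t).symm z)) (U t (A x)) := ((U t).inner_map_map _ _).symm
      _ = inner ℂ z (U t (A x)) := by rw [LinearIsometryEquiv.apply_symm_apply]
      _ = inner ℂ z ((p t : ℂ) • (A ⟨U t (x : H), hx'⟩ : H)) := by rw [heq]
      _ = (p t : ℂ) * inner ℂ z (A ⟨U t (x : H), hx'⟩ : H) := inner_smul_right _ _ _
      _ = -(inner ℂ z (U t (x : H)) : ℂ) := hz ⟨U t (x : H), hx'⟩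
      _ = -(inner ℂ (U t ((U t).symm z)) (U t (x : H)) : ℂ) := by
            rw [LinearIsometryEquiv.apply_symm_apply]
      _ = -(inner ℂ ((U t).symm z) (x : H) : ℂ) := by rw [(U t).inner_map_map]
  -- Step C : `G t` maps `ker (A* + 1/p t)` into `ker (A* + 1)`
  have stepC : ∀ (z : H) (x₀ : A₀.domain), A₀ x₀ + (x₀ : H) = z →
      (∀ x : A.domain, (p t : ℂ) * (inner ℂ z (A x) : ℂ) = -(inner ℂ z (x : H) : ℂ)) →
      ∀ x : A.domain,
        (inner ℂ ((p t : ℂ) • A₀ x₀ + (x₀ : H)) (A x) : ℂ)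
          = -(inner ℂ ((p t : ℂ) • A₀ x₀ + (x₀ : H)) (x : H) : ℂ) := by
    intro z x₀ hzz hQ x
    have h := hQ x
    rw [← hzz] at h
    have hx' : (x : H) ∈ A₀.domain := hle.1 x.2
    have hAx : (A x : H) = A₀ ⟨(x : H), hx'⟩ := hle.2 rfl
    have hb : (inner ℂ (x₀ : H) (A₀ ⟨(x : H), hx'⟩) : ℂ)
        = inner ℂ (A₀ x₀) (x : H) := (hFA x₀ ⟨(x : H), hx'⟩).symm
    rw [hAx] at h ⊢
    simp only [inner_add_left, inner_smul_left, Complex.conj_ofReal] at h ⊢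
    rw [hb] at h ⊢
    linear_combination h
  -- Step D : the inverse direction of Step C
  have stepD : ∀ (y : H) (x₀ : A₀.domain), (p t : ℂ) • A₀ x₀ + (x₀ : H) = y →
      (∀ x : A.domain, (inner ℂ y (A x) : ℂ) = -(inner ℂ y (x : H) : ℂ)) →
      ∀ x : A.domain,
        (p t : ℂ) * (inner ℂ (A₀ x₀ + (x₀ : H)) (A x) : ℂ)
          = -(inner ℂ (A₀ x₀ + (x₀ : H)) (x : H) : ℂ) := by
    intro y x₀ hzz hQ x
    have h := hQ x
    rw [← hzz] at h
    have hx' : (x : H) ∈ A₀.domain := hle.1 x.2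
    have hAx : (A x : H) = A₀ ⟨(x : H), hx'⟩ := hle.2 rfl
    have hb : (inner ℂ (x₀ : H) (A₀ ⟨(x : H), hx'⟩) : ℂ)
        = inner ℂ (A₀ x₀) (x : H) := (hFA x₀ ⟨(x : H), hx'⟩).symm
    rw [hAx] at h ⊢
    simp only [inner_add_left, inner_smul_left, Complex.conj_ofReal] at h ⊢
    rw [hb] at h ⊢
    linear_combination h
  -- main argument
  ext y
  constructor
  · rintro ⟨w, hwS, rfl⟩
    have hw := (memK w).mp hwS
    obtain ⟨x₀, hx₀⟩ := hsurj (U t w)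
    have hQ1 := stepC (U t w) x₀ hx₀ (stepA w hw)
    have hGv : G t (U t w) = (p t : ℂ) • A₀ x₀ + (x₀ : H) := by
      rw [← hx₀]; exact hG t x₀
    exact (memK (G t (U t w))).mpr (fun x => by rw [hGv]; exact hQ1 x)
  · intro hyS
    have hy := (memK y).mp hyS
    obtain ⟨w, hw⟩ := hsurj ((U t).symm y)
    have hw' : U t (w : H) ∈ A₀.domain := ((hhom t).1 w).mp w.2
    have heqw : U t (A₀ w) = (p t : ℂ) • (A₀ ⟨U t (w : H), hw'⟩ : H) :=
      (hhom t).2 (w : H) w.2 hw'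
    have hx₀ : (p t : ℂ) • A₀ (⟨U t (w : H), hw'⟩ : A₀.domain)
        + ((⟨U t (w : H), hw'⟩ : A₀.domain) : H) = y := by
      have h := congrArg (U t) hw
      rw [map_add, LinearIsometryEquiv.apply_symm_apply, heqw] at h
      exact h
    have hQ2 := stepD y _ hx₀ hy
    have hQ1 := stepB _ hQ2
    refine ⟨(U t).symm (A₀ (⟨U t (w : H), hw'⟩ : A₀.domain)
        + ((⟨U t (w : H), hw'⟩ : A₀.domain) : H)), (memK _).mpr hQ1, ?_⟩
    show G t (U t ((U t).symm _)) = y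
    rw [LinearIsometryEquiv.apply_symm_apply, hG t]
    exact hx₀
end
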